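/- arXiv:math/0507197 — 2 statements merged into one kernel-verified Lean document; each statement's English description precedes it below -/
import Mathlib

section
/- Let n be a positive even integer, let q be the discriminant quadratic form of the lattice ⟨2⟩⊕⟨−n⟩, and let q₂ be its restriction to the 2-primary component of the discriminant group. Then the group O(q₂) of automorphisms of the 2-primary component preserving q₂ has order 1 if n ≡ 2 mod 8, order 4 (isomorphic to (ℤ/2ℤ)²) if n ≡ 0 mod 16, and order 2 in all remaining cases (n ≡ 4 mod 8, n ≡ 6 mod 8, or n ≡ 8 mod 16). -/
open Matrix

/-- An integral lattice: a free `ℤ`-module `Fin rank → ℤ` equipped with a symmetric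
integer Gram matrix. -/
structure IntLattice where
  rank : ℕ
  gram : Matrix (Fin rank) (Fin rank) ℤ
  symm : gram.IsSymm

namespace IntLattice

/-- The bilinear form of the lattice. -/
def bilin (L : IntLattice) (x y : Fin L.rank → ℤ) : ℤ := x ⬝ᵥ (L.gram *ᵥ y)

lemma gram_symm_apply (L : IntLattice) (i j : Fin L.rank) : L.gram j i = L.gram i j :=
  congrFun (congrFun L.symm i) j

lemma bilin_comm (L : IntLattice) (x y : Fin L.rank → ℤ) :
    L.bilin x y = L.bilin y x := by
  simp only [bilin, dotProduct, mulVec, Finset.mul_sum]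
  rw [Finset.sum_comm]
  exact Finset.sum_congr rfl fun j _ => Finset.sum_congr rfl fun i _ => by
    rw [L.gram_symm_apply i j]; ring

/-- The lattice is even: all norms are even. -/
def IsEven (L : IntLattice) : Prop := ∀ x, 2 ∣ L.bilin x x

/-- The lattice is unimodular: the Gram matrix has determinant `±1`, equivalently the
map `L → Hom(L,ℤ)` is bijective. -/
def IsUnimodular (L : IntLattice) : Prop := IsUnit L.gram.det

/-- Positive definite lattice. -/
def PosDef (L : IntLattice) : Prop := ∀ x, x ≠ 0 → 0 < L.bilin x x

/-- The real quadratic form of the lattice has `p` positive and `q` negative squares. -/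
def HasSignature (L : IntLattice) (p q : ℕ) : Prop :=
  L.rank = p + q ∧
  ∃ Q : Matrix (Fin L.rank) (Fin L.rank) ℝ, IsUnit Q.det ∧
    Qᵀ * (L.gram.map ((↑) : ℤ → ℝ)) * Q =
      Matrix.diagonal (fun i : Fin L.rank => if (i : ℕ) < p then (1 : ℝ) else -1)

/-- The rational extension of the bilinear form. -/
def qbilin (L : IntLattice) (x y : Fin L.rank → ℚ) : ℚ :=
  x ⬝ᵥ ((L.gram.map ((↑) : ℤ → ℚ)) *ᵥ y)

end IntLattice

def castVec {N : ℕ} (x : Fin N → ℤ) : Fin N → ℚ := fun i => (x i : ℚ)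

def castHom (N : ℕ) : (Fin N → ℤ) →+ (Fin N → ℚ) where
  toFun := castVec
  map_zero' := by funext i; simp [castVec]
  map_add' a b := by funext i; simp [castVec]

namespace IntLattice

/-- The dual lattice `L∨ = {x ∈ L⊗ℚ : ⟨x,L⟩ ⊆ ℤ}`, as an additive subgroup of `ℚ^rank`. -/
def dualSub (L : IntLattice) : AddSubgroup (Fin L.rank → ℚ) where
  carrier := {x | ∀ y : Fin L.rank → ℤ, ∃ m : ℤ, L.qbilin x (castVec y) = m}
  add_mem' := by
    intro a b ha hb y
    obtain ⟨m, hm⟩ := ha y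
    obtain ⟨m', hm'⟩ := hb y
    refine ⟨m + m', ?_⟩
    simp only [qbilin, add_dotProduct] at *
    rw [hm, hm']; push_cast; ring
  zero_mem' := by
    intro y
    exact ⟨0, by simp [qbilin]⟩
  neg_mem' := by
    intro a ha y
    obtain ⟨m, hm⟩ := ha y
    refine ⟨-m, ?_⟩
    simp only [qbilin, neg_dotProduct] at *
    rw [hm]; push_cast; ring

/-- The image of `L` inside `L⊗ℚ`. -/
def latticeIn (L : IntLattice) : AddSubgroup (Fin L.rank → ℚ) := (castHom L.rank).range

/-- The discriminant group `A_L = L∨/L`. -/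
abbrev discGroup (L : IntLattice) : Type :=
  ↥(L.dualSub) ⧸ (L.latticeIn).addSubgroupOf L.dualSub

/-- Projection from the dual lattice to the discriminant group. -/
def dmk (L : IntLattice) : L.dualSub → L.discGroup := QuotientAddGroup.mk

/-- `g : A_M → A_N` carries the discriminant quadratic form `q_M` to `q_N`
(values in `ℚ/2ℤ`). -/
def QFormIso (M N : IntLattice) (g : M.discGroup ≃+ N.discGroup) : Prop :=
  ∀ x : M.dualSub, ∃ y : N.dualSub,
    N.dmk y = g (M.dmk x) ∧ ∃ m : ℤ, N.qbilin ↑y ↑y - M.qbilin ↑x ↑x = 2 * (m : ℚ)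

/-- `g : A_M → A_N` carries the discriminant quadratic form `q_M` to `-q_N`. -/
def QFormIsoNeg (M N : IntLattice) (g : M.discGroup ≃+ N.discGroup) : Prop :=
  ∀ x : M.dualSub, ∃ y : N.dualSub,
    N.dmk y = g (M.dmk x) ∧ ∃ m : ℤ, N.qbilin ↑y ↑y + M.qbilin ↑x ↑x = 2 * (m : ℚ)

/-- The integer matrix `F` defines an isometry `M → N` of lattices (`x ↦ F *ᵥ x`). -/
def MatIsometry (M N : IntLattice) (F : Matrix (Fin N.rank) (Fin M.rank) ℤ) : Prop :=
  (∃ F' : Matrix (Fin M.rank) (Fin N.rank) ℤ, F * F' = 1 ∧ F' * F = 1) ∧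
  Fᵀ * N.gram * F = M.gram

/-- The lattices `M` and `N` are isometric. -/
def Isometric (M N : IntLattice) : Prop := ∃ F, MatIsometry M N F

end IntLattice

/-- The rows of `B` form a `ℤ`-basis of the submodule `S`. -/
def IsBasisOf {N : ℕ} (S : Submodule ℤ (Fin N → ℤ)) {r : ℕ}
    (B : Matrix (Fin r) (Fin N) ℤ) : Prop :=
  (∀ i, B i ∈ S) ∧ ∀ x ∈ S, ∃! c : Fin r → ℤ, x = Matrix.vecMul c B

namespace IntLattice

/-- Gram matrix of the vectors given by the rows of `B`. -/
def gramOf (L : IntLattice) {r : ℕ} (B : Matrix (Fin r) (Fin L.rank) ℤ) :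
    Matrix (Fin r) (Fin r) ℤ := Matrix.of fun i j => L.bilin (B i) (B j)

lemma gramOf_isSymm (L : IntLattice) {r : ℕ} (B : Matrix (Fin r) (Fin L.rank) ℤ) :
    (L.gramOf B).IsSymm := by
  unfold Matrix.IsSymm
  ext i j
  simp only [transpose_apply, gramOf, Matrix.of_apply]
  exact L.bilin_comm _ _

/-- The sublattice of `L` spanned by the rows of `B`, as an abstract lattice. -/
def sub (L : IntLattice) {r : ℕ} (B : Matrix (Fin r) (Fin L.rank) ℤ) : IntLattice :=
  ⟨r, L.gramOf B, L.gramOf_isSymm B⟩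

/-- `M(1/2)`: the same module with the form divided by two. -/
abbrev halfL (M : IntLattice) : IntLattice :=
  ⟨M.rank, M.gram.map (fun z => z / 2), M.symm.map _⟩

end IntLattice

/-- Orthogonal direct sum of Gram matrices. -/
def dsumGram {m k : ℕ} (A : Matrix (Fin m) (Fin m) ℤ) (B : Matrix (Fin k) (Fin k) ℤ) :
    Matrix (Fin (m + k)) (Fin (m + k)) ℤ :=
  Matrix.of fun i j =>
    if hi : (i : ℕ) < m then
      if hj : (j : ℕ) < m then A ⟨i, hi⟩ ⟨j, hj⟩ else 0
    else
      if hj : (j : ℕ) < m then 0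
      else B ⟨(i : ℕ) - m, by omega⟩ ⟨(j : ℕ) - m, by omega⟩

lemma dsumGram_isSymm {m k : ℕ} {A : Matrix (Fin m) (Fin m) ℤ}
    {B : Matrix (Fin k) (Fin k) ℤ} (hA : A.IsSymm) (hB : B.IsSymm) :
    (dsumGram A B).IsSymm := by
  unfold Matrix.IsSymm
  ext i j
  simp only [transpose_apply, dsumGram, Matrix.of_apply]
  have hA' : ∀ a b, A b a = A a b := fun a b => congrFun (congrFun hA a) b
  have hB' : ∀ a b, B b a = B a b := fun a b => congrFun (congrFun hB a) b
  by_cases hi : (i : ℕ) < m <;> by_cases hj : (j : ℕ) < m <;> simp [hi, hj]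
  · exact hA' _ _
  · exact hB' _ _

/-- Orthogonal direct sum of lattices. -/
def IntLattice.dsum (M N : IntLattice) : IntLattice :=
  ⟨M.rank + N.rank, dsumGram M.gram N.gram, dsumGram_isSymm M.symm N.symm⟩

/-- The lattice with diagonal Gram matrix `diag d`. -/
def diagL {r : ℕ} (d : Fin r → ℤ) : IntLattice :=
  ⟨r, Matrix.diagonal d, Matrix.isSymm_diagonal d⟩

/-- The hyperbolic plane `U`. -/
def UL : IntLattice := ⟨2, Matrix.of !![0, 1; 1, 0], by decide⟩

/-- The negative definite even unimodular lattice `E₈` (negative of the `E₈` Cartan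
matrix; node `0` is the branch node with arms `1`, `2-3`, `4-5-6-7`). -/
def E8L : IntLattice :=
  ⟨8, !![-2,  1,  1,  0,  1,  0,  0,  0;
          1, -2,  0,  0,  0,  0,  0,  0;
          1,  0, -2,  1,  0,  0,  0,  0;
          0,  0,  1, -2,  0,  0,  0,  0;
          1,  0,  0,  0, -2,  1,  0,  0;
          0,  0,  0,  0,  1, -2,  1,  0;
          0,  0,  0,  0,  0,  1, -2,  1;
          0,  0,  0,  0,  0,  0,  1, -2], by decide⟩

/-- The rank-two lattice with Gram matrix `[[a,b],[b,d]]`. -/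
def sym2L (a b d : ℤ) : IntLattice :=
  ⟨2, !![a, b; b, d], by
    unfold Matrix.IsSymm
    ext i j
    fin_cases i <;> fin_cases j <;> simp⟩

/-- The `ε`-eigenspace of an involution `φ`. -/
def eigenSub {n : ℕ} (φ : (Fin n → ℤ) ≃ₗ[ℤ] (Fin n → ℤ)) (ε : ℤ) :
    Submodule ℤ (Fin n → ℤ) where
  carrier := {x | φ x = ε • x}
  add_mem' := by
    intro a b ha hb
    simp only [Set.mem_setOf_eq] at *
    rw [map_add, ha, hb, smul_add]
  zero_mem' := by simp
  smul_mem' := by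
    intro c x hx
    simp only [Set.mem_setOf_eq] at *
    rw [_root_.map_smul, hx, smul_comm]

/-- The orthogonal complement of a set of vectors in `L`. -/
def perpOfSet (L : IntLattice) (S : Set (Fin L.rank → ℤ)) :
    Submodule ℤ (Fin L.rank → ℤ) where
  carrier := {x | ∀ s ∈ S, L.bilin x s = 0}
  add_mem' := by
    intro a b ha hb s hs
    have ha' := ha s hs
    have hb' := hb s hs
    simp only [IntLattice.bilin] at ha' hb' ⊢
    rw [add_dotProduct, ha', hb', add_zero]
  zero_mem' := by
    intro s hs
    simp [IntLattice.bilin]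
  smul_mem' := by
    intro c x hx s hs
    have hx' := hx s hs
    simp only [IntLattice.bilin] at hx' ⊢
    rw [smul_dotProduct, hx', smul_zero]

/-- `P` is a primitive lattice vector. -/
def Primitive {n : ℕ} (P : Fin n → ℤ) : Prop :=
  P ≠ 0 ∧ ∀ (m : ℤ) (y : Fin n → ℤ), P = m • y → IsUnit m

/-- An integral polarized K3 involution `(L, φ, P′)`: `L` is an even unimodular lattice
of signature `(3,19)`, `φ` a form-preserving involution with hyperbolic fixed lattice,
and `P′` a polarization with `φ(P′) = -P′` and `(P′)² > 0`. -/
structure K3Inv where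
  L : IntLattice
  even : L.IsEven
  unimod : L.IsUnimodular
  sig : L.HasSignature 3 19
  φ : (Fin L.rank → ℤ) ≃ₗ[ℤ] (Fin L.rank → ℤ)
  φ_isom : ∀ x y, L.bilin (φ x) (φ y) = L.bilin x y
  φ_invol : ∀ x, φ (φ x) = x
  P' : Fin L.rank → ℤ
  φP' : φ P' = -P'
  P'pos : 0 < L.bilin P' P'
  fixed_hyp : ∃ (r : ℕ) (B : Matrix (Fin r) (Fin L.rank) ℤ),
    IsBasisOf (eigenSub φ 1) B ∧ (L.sub B).HasSignature 1 (r - 1)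

/-- Isomorphism of integral polarized K3 involutions. -/
def K3Iso (K K' : K3Inv) : Prop :=
  ∃ f : (Fin K.L.rank → ℤ) ≃ₗ[ℤ] (Fin K'.L.rank → ℤ),
    (∀ x y, K'.L.bilin (f x) (f y) = K.L.bilin x y) ∧
    f K.P' = K'.P' ∧
    ∀ x, K'.φ (f x) = f (K.φ x)

/-- `(L,φ,P′)` has genus invariants `(r, a, δ_φ; k, n, δ_P, δ_{φP})`. -/
def HasGenusInvariants (K : K3Inv) (r a δφ k : ℕ) (n : ℤ) (δP δφP : ℕ) : Prop :=
  (δφ = 0 ∨ δφ = 1) ∧ (δP = 0 ∨ δP = 1) ∧ (δφP = 0 ∨ δφP = 1) ∧ 1 ≤ k ∧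
  (∃ B : Matrix (Fin r) (Fin K.L.rank) ℤ,
      IsBasisOf (eigenSub K.φ 1) B ∧
      Nonempty ((K.L.sub B).discGroup ≃+ (Fin a → ZMod 2))) ∧
  (δφ = 0 ↔ ∀ x, 2 ∣ K.L.bilin x (K.φ x)) ∧
  ∃ P : Fin K.L.rank → ℤ, Primitive P ∧ K.P' = (k : ℤ) • P ∧ n = K.L.bilin P P ∧
    (δP = 0 ↔ ∀ y ∈ eigenSub K.φ (-1), 2 ∣ K.L.bilin P y) ∧
    (δφP = 0 ↔ ∀ x, 2 ∣ (K.L.bilin x (K.φ x) - K.L.bilin x P))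

/-- Two even lattices belong to the same genus: equal signatures over `ℝ` and
isomorphic discriminant quadratic forms. -/
def SameGenus (M N : IntLattice) : Prop :=
  (∃ p q, M.HasSignature p q ∧ N.HasSignature p q) ∧
  ∃ g : M.discGroup ≃+ N.discGroup, IntLattice.QFormIso M N g

/-- The `p`-primary part of an abelian group. -/
def primaryPart (p : ℕ) (G : Type*) [AddCommGroup G] : AddSubgroup G where
  carrier := {x | ∃ j : ℕ, p ^ j • x = 0}
  add_mem' := by
    rintro a b ⟨j, hj⟩ ⟨l, hl⟩
    refine ⟨j + l, ?_⟩
    rw [smul_add]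
    have h1 : p ^ (j + l) • a = 0 := by rw [pow_add, mul_comm, SemigroupAction.mul_smul, hj, smul_zero]
    have h2 : p ^ (j + l) • b = 0 := by rw [pow_add, SemigroupAction.mul_smul, hl, smul_zero]
    rw [h1, h2, add_zero]
  zero_mem' := ⟨0, smul_zero _⟩
  neg_mem' := by
    rintro a ⟨j, hj⟩
    exact ⟨j, by rw [smul_neg, hj, neg_zero]⟩

/-- A pair `(M, τ)`: an even lattice `M` in the genus of the reference lattice `R`
together with an isomorphism `τ : q_M → q_R` of discriminant quadratic forms. -/
structure QPairR (R : IntLattice) where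
  M : IntLattice
  even : M.IsEven
  genus : SameGenus M R
  τ : M.discGroup ≃+ R.discGroup
  hτ : IntLattice.QFormIso M R τ

/-- Equivalence of pairs: `(M,τ) ∼ (M̃,τ̃)` iff there is an isometry `f : M → M̃`
with `τ = τ̃ ∘ f̄`, where `f̄` is the induced map on discriminant groups. -/
def QPairREquiv {R : IntLattice} (p p' : QPairR R) : Prop :=
  ∃ F : Matrix (Fin p'.M.rank) (Fin p.M.rank) ℤ,
    IntLattice.MatIsometry p.M p'.M F ∧
    ∀ (x : p.M.dualSub) (y : p'.M.dualSub),
      (y : Fin p'.M.rank → ℚ) = (F.map ((↑) : ℤ → ℚ)) *ᵥ (x : Fin p.M.rank → ℚ) →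
      p.τ (p.M.dmk x) = p'.τ (p'.M.dmk y)

/-- `τ` is an isomorphism from the discriminant bilinear form of `M(1/2)` to the
standard form `b_{⟨-n/2⟩}` on `ℤ/(n/2)`, which sends `(x̄,ȳ)` to `-2xy/n mod ℤ`. -/
def BIsoStd (M : IntLattice) (n : ℤ) (τ : (M.halfL).discGroup ≃+ ZMod (n / 2).toNat) :
    Prop :=
  ∀ (x y : (M.halfL).dualSub) (α β : ℤ),
    ((α : ZMod (n / 2).toNat) = τ ((M.halfL).dmk x)) →
    ((β : ZMod (n / 2).toNat) = τ ((M.halfL).dmk y)) →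
    ∃ m : ℤ, (M.halfL).qbilin ↑x ↑y + (2 * α * β : ℚ) / (n : ℚ) = (m : ℚ)

/-- A pair `(M, τ)`: an even lattice `M` in the genus of the reference lattice `R`
together with an isomorphism `τ : b_{M(1/2)} → b_{⟨-n/2⟩}` of discriminant bilinear
forms. -/
structure BPairR (R : IntLattice) (n : ℤ) where
  M : IntLattice
  even : M.IsEven
  genus : SameGenus M R
  τ : (M.halfL).discGroup ≃+ ZMod (n / 2).toNat
  hτ : BIsoStd M n τ

/-- Equivalence of pairs `(M,τ) ∼ (M̃,τ̃)`: there is an isometry `f : M → M̃` with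
`τ = τ̃ ∘ f̄`. -/
def BPairREquiv {R : IntLattice} {n : ℤ} (p p' : BPairR R n) : Prop :=
  ∃ F : Matrix (Fin p'.M.rank) (Fin p.M.rank) ℤ,
    IntLattice.MatIsometry p.M p'.M F ∧
    ∀ (x : (p.M.halfL).dualSub) (y : (p'.M.halfL).dualSub),
      (y : Fin p'.M.rank → ℚ) = (F.map ((↑) : ℤ → ℚ)) *ᵥ (x : Fin p.M.rank → ℚ) →
      p.τ ((p.M.halfL).dmk x) = p'.τ ((p'.M.halfL).dmk y)

/-- `g` is an isomorphism `b_{⟨n/2⟩} → -b_{⟨n/2⟩}` of finite bilinear forms on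
`ℤ/(n/2)`, where `b_{⟨n/2⟩}(x̄,ȳ) = 2xy/n mod ℤ`. -/
def NegBIso (n : ℤ) (g : ZMod (n / 2).toNat ≃+ ZMod (n / 2).toNat) : Prop :=
  ∀ x y x' y' : ℤ,
    ((x' : ZMod (n / 2).toNat) = g ((x : ℤ) : ZMod (n / 2).toNat)) →
    ((y' : ZMod (n / 2).toNat) = g ((y : ℤ) : ZMod (n / 2).toNat)) →
    n ∣ 2 * (x' * y' + x * y)

/-- `g` preserves the restriction to the 2-primary part of the discriminant quadratic
form `q(x̄,ȳ) = x²/2 - y²/n mod 2ℤ` of `⟨2⟩⊕⟨-n⟩` on `ℤ/2 × ℤ/n`. -/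
def QPres2 (n : ℤ)
    (g : primaryPart 2 (ZMod 2 × ZMod n.toNat) ≃+ primaryPart 2 (ZMod 2 × ZMod n.toNat)) :
    Prop :=
  ∀ (x : primaryPart 2 (ZMod 2 × ZMod n.toNat)) (α β α' β' : ℤ),
    ((α : ZMod 2) = (x : ZMod 2 × ZMod n.toNat).1) →
    ((β : ZMod n.toNat) = (x : ZMod 2 × ZMod n.toNat).2) →
    ((α' : ZMod 2) = ((g x : primaryPart 2 (ZMod 2 × ZMod n.toNat)) : ZMod 2 × ZMod n.toNat).1) →
    ((β' : ZMod n.toNat) = ((g x : primaryPart 2 (ZMod 2 × ZMod n.toNat)) : ZMod 2 × ZMod n.toNat).2) →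
    (4 * n) ∣ (n * (α' ^ 2 - α ^ 2) - 2 * (β' ^ 2 - β ^ 2))

/-- `g` preserves the restriction to the 2-primary part of the discriminant bilinear
form `b(x̄,ȳ) = -2xy/n mod ℤ` of `⟨-n/2⟩` on `ℤ/(n/2)`. -/
def BPres2 (n : ℤ)
    (g : primaryPart 2 (ZMod (n / 2).toNat) ≃+ primaryPart 2 (ZMod (n / 2).toNat)) :
    Prop :=
  ∀ (x y : primaryPart 2 (ZMod (n / 2).toNat)) (α β α' β' : ℤ),
    ((α : ZMod (n / 2).toNat) = (x : ZMod (n / 2).toNat)) →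
    ((β : ZMod (n / 2).toNat) = (y : ZMod (n / 2).toNat)) →
    ((α' : ZMod (n / 2).toNat) = ((g x : primaryPart 2 (ZMod (n / 2).toNat)) : ZMod (n / 2).toNat)) →
    ((β' : ZMod (n / 2).toNat) = ((g y : primaryPart 2 (ZMod (n / 2).toNat)) : ZMod (n / 2).toNat)) →
    n ∣ 2 * (α' * β' - α * β)


namespace OQ2NT

/-! ### cardinality helpers -/

lemma card_eq_one_of {X : Type*} {P : X → Prop} (x0 : X) (h0 : P x0)
    (huniq : ∀ x, P x → x = x0) : Nat.card {x // P x} = 1 := by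
  have : Unique {x // P x} :=
    { default := ⟨x0, h0⟩, uniq := fun x => Subtype.ext (huniq x.1 x.2) }
  exact Nat.card_unique

lemma card_eq_two_of {X : Type*} {P : X → Prop} (x0 x1 : X) (h0 : P x0) (h1 : P x1)
    (hne : x0 ≠ x1) (hall : ∀ x, P x → x = x0 ∨ x = x1) : Nat.card {x // P x} = 2 := by
  have hb : Function.Bijective
      (fun b : Bool => if b then (⟨x1, h1⟩ : {x // P x}) else ⟨x0, h0⟩) := by
    constructor
    · intro a b hab
      cases a <;> cases b <;> simp_all [Subtype.mk.injEq]
    · rintro ⟨x, hx⟩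
      rcases hall x hx with rfl | rfl
      · exact ⟨false, rfl⟩
      · exact ⟨true, rfl⟩
  rw [← Nat.card_eq_of_bijective _ hb]
  simp [Nat.card_eq_fintype_card]

lemma card_eq_four_of {X : Type*} {P : X → Prop} (x0 x1 x2 x3 : X)
    (h0 : P x0) (h1 : P x1) (h2 : P x2) (h3 : P x3)
    (h01 : x0 ≠ x1) (h02 : x0 ≠ x2) (h03 : x0 ≠ x3)
    (h12 : x1 ≠ x2) (h13 : x1 ≠ x3) (h23 : x2 ≠ x3)
    (hall : ∀ x, P x → x = x0 ∨ x = x1 ∨ x = x2 ∨ x = x3) : Nat.card {x // P x} = 4 := by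
  have hb : Function.Bijective
      (fun i : Fin 4 => if i = 0 then (⟨x0, h0⟩ : {x // P x}) else if i = 1 then ⟨x1, h1⟩
        else if i = 2 then ⟨x2, h2⟩ else ⟨x3, h3⟩) := by
    constructor
    · intro a b hab
      fin_cases a <;> fin_cases b <;> simp_all [Subtype.mk.injEq]
    · rintro ⟨x, hx⟩
      rcases hall x hx with rfl | rfl | rfl | rfl
      · exact ⟨0, rfl⟩
      · exact ⟨1, rfl⟩
      · exact ⟨2, rfl⟩
      · exact ⟨3, rfl⟩
  rw [← Nat.card_eq_of_bijective _ hb]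
  simp [Nat.card_eq_fintype_card]

/-! ### k = 1 classification via `ZMod 4` -/

lemma zmod4_of_dvd {X : ℤ} (h : (4:ℤ) ∣ X) : ((X : ℤ) : ZMod 4) = 0 :=
  (ZMod.intCast_zmod_eq_zero_iff_dvd _ 4).mpr h

lemma two_dvd_iff (x y : ℤ) :
    (2:ℤ) ∣ x - y ↔ (ZMod.castHom (by norm_num : (2:ℕ) ∣ 4) (ZMod 2)) ((x : ℤ) : ZMod 4)
      = ((y : ℤ) : ZMod 2) := by
  rw [map_intCast]
  rw [← sub_eq_zero, show ((x:ℤ) : ZMod 2) - ((y:ℤ):ZMod 2) = ((x - y : ℤ) : ZMod 2) by push_cast; ring]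
  rw [ZMod.intCast_zmod_eq_zero_iff_dvd]
  norm_cast

lemma class_k1_m1 {m u v w z : ℤ} (hm4 : m % 4 = 1)
    (h10 : (4:ℤ) ∣ u^2 - 1 - m*v^2)
    (h01 : (4:ℤ) ∣ w^2 - m*(z^2-1)) :
    ((2:ℤ) ∣ u - 1 ∧ (2:ℤ) ∣ v - 0 ∧ (2:ℤ) ∣ w - 0 ∧ (2:ℤ) ∣ z - 1) := by
  have hmz : ((m:ℤ) : ZMod 4) = 1 := by
    have : ((m:ℤ) : ZMod 4) = ((1:ℤ) : ZMod 4) := by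
      rw [ZMod.intCast_eq_intCast_iff']
      omega
    simpa using this
  have e10 := zmod4_of_dvd h10
  have e01 := zmod4_of_dvd h01
  push_cast at e10 e01
  rw [hmz] at e10 e01
  rw [two_dvd_iff u 1, two_dvd_iff v 0, two_dvd_iff w 0, two_dvd_iff z 1]
  push_cast
  revert e10 e01
  generalize ((u:ℤ) : ZMod 4) = U
  generalize ((v:ℤ) : ZMod 4) = V
  generalize ((w:ℤ) : ZMod 4) = W
  generalize ((z:ℤ) : ZMod 4) = Z
  revert U V W Z
  decide

lemma class_k1_m3 {m u v w z : ℤ} (hm4 : m % 4 = 3)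
    (h10 : (4:ℤ) ∣ u^2 - 1 - m*v^2)
    (h01 : (4:ℤ) ∣ w^2 - m*(z^2-1))
    (h11 : (4:ℤ) ∣ (u+w)^2 - 1 - m*((v+z)^2-1)) :
    ((2:ℤ) ∣ u - 1 ∧ (2:ℤ) ∣ v - 0 ∧ (2:ℤ) ∣ w - 0 ∧ (2:ℤ) ∣ z - 1) ∨
    ((2:ℤ) ∣ u - 0 ∧ (2:ℤ) ∣ v - 1 ∧ (2:ℤ) ∣ w - 1 ∧ (2:ℤ) ∣ z - 0) := by
  have hmz : ((m:ℤ) : ZMod 4) = 3 := by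
    have : ((m:ℤ) : ZMod 4) = ((3:ℤ) : ZMod 4) := by
      rw [ZMod.intCast_eq_intCast_iff']
      omega
    simpa using this
  have e10 := zmod4_of_dvd h10
  have e01 := zmod4_of_dvd h01
  have e11 := zmod4_of_dvd h11
  push_cast at e10 e01 e11
  rw [hmz] at e10 e01 e11
  rw [two_dvd_iff u 1, two_dvd_iff v 0, two_dvd_iff w 0, two_dvd_iff z 1,
    two_dvd_iff u 0, two_dvd_iff v 1, two_dvd_iff w 1, two_dvd_iff z 0]
  push_cast
  revert e10 e01 e11
  generalize ((u:ℤ) : ZMod 4) = U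
  generalize ((v:ℤ) : ZMod 4) = V
  generalize ((w:ℤ) : ZMod 4) = W
  generalize ((z:ℤ) : ZMod 4) = Z
  revert U V W Z
  decide


/-! ### coprimality helpers -/

lemma odd_coprime_pow (x : ℤ) (hx : x % 2 = 1) (j : ℕ) : IsCoprime ((2:ℤ)^j) x := by
  apply IsCoprime.pow_left
  exact ⟨-(x/2), 1, by omega⟩

lemma consec_pow_dvd {j : ℕ} {c T : ℤ} (hT : T % 2 = 1) (h : (2:ℤ)^j ∣ c * (c + T)) :
    (2:ℤ)^(j+1) ∣ 2*c ∨ (2:ℤ)^(j+1) ∣ 2*(c+T) := by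
  rcases Int.even_or_odd c with hc | hc
  · left
    have hodd : (c + T) % 2 = 1 := by
      rcases hc with ⟨r, hr⟩
      omega
    have := (odd_coprime_pow (c+T) hodd j).dvd_of_dvd_mul_right h
    obtain ⟨d, hd⟩ := this
    exact ⟨d, by rw [pow_succ]; linear_combination 2*hd⟩
  · right
    have hodd : c % 2 = 1 := by
      rcases hc with ⟨r, hr⟩
      omega
    have h' : (2:ℤ)^j ∣ (c+T) * c := by rwa [mul_comm]
    have := (odd_coprime_pow c hodd j).dvd_of_dvd_mul_right h'
    obtain ⟨d, hd⟩ := this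
    exact ⟨d, by rw [pow_succ]; linear_combination 2*hd⟩

/-! ### the classification for `k ≥ 2` -/

lemma classify_k2 {k : ℕ} (hkk : 2 ≤ k) {m u v w z : ℤ} (hm : m % 2 = 1)
    (hv : (2:ℤ)^(k-1) ∣ v)
    (h10 : (2:ℤ)^(k+2) ∣ 2^k*(u^2-1) - 2*m*v^2)
    (h01 : (2:ℤ)^(k+2) ∣ 2^k*w^2 - 2*m*(z^2-1))
    (h11 : (2:ℤ)^(k+2) ∣ 2^k*((u+w)^2-1) - 2*m*((v+z)^2-1)) :
    (2:ℤ) ∣ u - 1 ∧ z % 2 = 1 ∧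
    ((((2:ℤ) ∣ w - 0) ∧ ((2:ℤ)^k ∣ v - 0) ∧ ((2:ℤ)^k ∣ z - 1 ∨ (2:ℤ)^k ∣ z - (-1))) ∨
     (((2:ℤ) ∣ w - 1) ∧ (4:ℤ) ∣ (2:ℤ)^(k-2) ∧ ((2:ℤ)^k ∣ v - 2^(k-1)) ∧
       ∃ c' : ℤ, m*(z^2-1) = 2^(k-1) + 2^(k+1)*c')) := by
  obtain ⟨P, hP⟩ : ∃ P : ℤ, P = 2^(k-2) := ⟨_, rfl⟩
  have hP0 : P ≠ 0 := by rw [hP]; positivity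
  have hPpos : 0 < P := by rw [hP]; positivity
  have hP1 : (2:ℤ)^(k-1) = 2*P := by
    rw [hP, mul_comm, ← pow_succ]
    congr 1
    omega
  have hPk : (2:ℤ)^k = 4*P := by
    rw [hP, show (4:ℤ) = 2^2 by norm_num, mul_comm, ← pow_add]
    congr 1
    omega
  have hPk1 : (2:ℤ)^(k+1) = 8*P := by
    rw [hP, show (8:ℤ) = 2^3 by norm_num, mul_comm, ← pow_add]
    congr 1
    omega
  have hPk2 : (2:ℤ)^(k+2) = 16*P := by
    rw [hP, show (16:ℤ) = 2^4 by norm_num, mul_comm, ← pow_add]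
    congr 1
    omega
  rw [hP1] at hv
  obtain ⟨v1, rfl⟩ := hv
  obtain ⟨d01, hd01⟩ := h01
  obtain ⟨d10, hd10⟩ := h10
  obtain ⟨d11, hd11⟩ := h11
  rw [hPk, hPk2] at hd01 hd10 hd11
  -- z is odd
  have hzodd : z % 2 = 1 := by
    rcases Int.even_or_odd' z with ⟨c, hc | hc⟩
    · exfalso
      subst hc
      have key : 4*(P*w^2) - 8*(m*c^2) + 2*m = 16*(P*d01) := by linear_combination hd01
      generalize P*w^2 = X at key
      generalize m*c^2 = Y at key
      generalize P*d01 = D at key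
      omega
    · omega
  obtain ⟨c, hcz⟩ : ∃ c, z = 2*c + 1 := ⟨z/2, by omega⟩
  subst hcz
  -- u is odd
  have huodd : u % 2 = 1 := by
    rcases Int.even_or_odd' u with ⟨e, he | he⟩
    · exfalso
      subst he
      have key : (4*P) * (4*e^2 - 1 - 2*(m*P*v1^2) - 4*d10) = (4*P) * 0 := by
        linear_combination hd10
      have key' := mul_left_cancel₀ (by positivity : (4:ℤ)*P ≠ 0) key
      generalize e^2 = X at key'
      generalize m*P*v1^2 = Y at key'
      omega
    · omega
  obtain ⟨e, hue⟩ : ∃ e, u = 2*e + 1 := ⟨u/2, by omega⟩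
  subst hue
  refine ⟨⟨e, by ring⟩, hzodd, ?_⟩
  have keyA : m*P*v1^2 = 2*(e^2 + e - d10) := by
    have key8 : (8*P) * (m*P*v1^2) = (8*P) * (2*(e^2 + e - d10)) := by
      linear_combination -hd10
    exact mul_left_cancel₀ (by positivity : (8:ℤ)*P ≠ 0) key8
  rcases Int.even_or_odd' w with ⟨f, hwf | hwf⟩
  · -- w even
    subst hwf
    left
    have keyC : m*(c^2+c) = 2*P*(f^2 - d01) := by
      have key8 : (8:ℤ) * (m*(c^2+c)) = 8 * (2*P*(f^2 - d01)) := by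
        linear_combination -hd01
      exact mul_left_cancel₀ (by norm_num : (8:ℤ) ≠ 0) key8
    have keyB : m*v1*(2*c+1) + m*P*v1^2
        = 2*((e+f)^2 + (e+f) - (f^2 - d01) - d11) := by
      have key8 : (8*P) * (m*v1*(2*c+1) + m*P*v1^2)
          = (8*P) * (2*((e+f)^2 + (e+f) - (f^2 - d01) - d11)) := by
        linear_combination -hd11 - 8*keyC
      exact mul_left_cancel₀ (by positivity : (8:ℤ)*P ≠ 0) key8
    have hv1even : v1 % 2 = 0 := by
      rcases Int.even_or_odd' v1 with ⟨r, hr | hr⟩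
      · omega
      · exfalso
        subst hr
        rcases Int.even_or_odd P with ⟨q, hq⟩ | hPo
        · -- P = q + q even : keyB gives odd = even
          obtain ⟨tM, htM⟩ : ∃ tM, m*(2*c+1) = 2*tM + 1 :=
            ⟨(m*(2*c+1) - 1)/2, by
              obtain ⟨cm, hcm⟩ := (Int.odd_iff.mpr hm).mul (⟨c, by ring⟩ : Odd (2*c+1))
              omega⟩
          have key' : 2*(m*r*(2*c+1) + m*q*(2*r+1)^2) + (2*tM + 1)
              = 2*((e+f)^2 + (e+f) - (f^2 - d01) - d11) := by
            linear_combination keyB - m*(2*r+1)^2*hq - htM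
          generalize m*r*(2*c+1) + m*q*(2*r+1)^2 = A at key'
          generalize (e+f)^2 + (e+f) - (f^2 - d01) - d11 = B at key'
          omega
        · -- P odd : keyA gives odd = even
          have hodd : Odd (m*P*(2*r+1)^2) :=
            ((Int.odd_iff.mpr hm).mul hPo).mul ((by exact ⟨r, by ring⟩ : Odd (2*r+1)).pow)
          rcases hodd with ⟨t, ht⟩
          rw [keyA] at ht
          generalize e^2 + e - d10 = X at ht
          omega
    obtain ⟨v2, rfl⟩ : ∃ v2, v1 = 2*v2 := ⟨v1/2, by omega⟩
    refine ⟨⟨f, by ring⟩, ?_, ?_⟩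
    · exact ⟨v2, by rw [hPk]; ring⟩
    · have hdvd : (2:ℤ)^(k-1) ∣ c*(c+1) := by
        have h2P : (2:ℤ)^(k-1) ∣ m * (c*(c+1)) := by
          rw [hP1]
          exact ⟨f^2 - d01, by linear_combination keyC⟩
        exact (odd_coprime_pow m hm (k-1)).dvd_of_dvd_mul_left h2P
      have hpow : (2:ℤ)^(k-1+1) = 2^k := by congr 1; omega
      rcases consec_pow_dvd (by norm_num : (1:ℤ) % 2 = 1) hdvd with h | h
      · left
        rw [hpow] at h
        obtain ⟨r, hr⟩ := h
        exact ⟨r, by linear_combination hr⟩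
      · right
        rw [hpow] at h
        obtain ⟨r, hr⟩ := h
        exact ⟨r, by linear_combination hr⟩
  · -- w odd
    subst hwf
    right
    have keyC : m*((2*c+1)^2-1) = 2*P + 8*P*(f^2 + f - d01) := by
      have key2 : (2:ℤ) * (m*((2*c+1)^2-1)) = 2 * (2*P + 8*P*(f^2 + f - d01)) := by
        linear_combination -hd01
      exact mul_left_cancel₀ (by norm_num : (2:ℤ) ≠ 0) key2
    have h8 : (8:ℤ) ∣ (2*c+1)^2 - 1 := by
      rcases Int.even_or_odd' c with ⟨r, hr | hr⟩ <;> subst hr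
      · exact ⟨2*r^2 + r, by ring⟩
      · exact ⟨2*r^2 + 3*r + 1, by ring⟩
    have hP4 : (4:ℤ) ∣ P := by
      have h8' : (8:ℤ) ∣ m * ((2*c+1)^2-1) := Dvd.dvd.mul_left h8 m
      rw [keyC] at h8'
      obtain ⟨r, hr⟩ := h8'
      have h4 : (4:ℤ) ∣ P * (1 + 4*(f^2+f-d01)) := by
        refine ⟨r, mul_left_cancel₀ (by norm_num : (2:ℤ) ≠ 0) ?_⟩
        linear_combination hr
      have hco : IsCoprime ((4:ℤ)) (1 + 4*(f^2+f-d01)) := by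
        have := odd_coprime_pow (1 + 4*(f^2+f-d01)) (by omega) 2
        convert this using 1; norm_num
      exact hco.dvd_of_dvd_mul_right h4
    have keyB : m*v1*(2*c+1) + m*P*v1^2
        = 2*((e+f+1)^2) - 1 - 2*(f^2+f-d01) - 2*d11 := by
      have key8 : (8*P) * (m*v1*(2*c+1) + m*P*v1^2)
          = (8*P) * (2*((e+f+1)^2) - 1 - 2*(f^2+f-d01) - 2*d11) := by
        linear_combination -hd11 - 2*keyC
      exact mul_left_cancel₀ (by positivity : (8:ℤ)*P ≠ 0) key8
    have hv1odd : v1 % 2 = 1 := by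
      rcases Int.even_or_odd' v1 with ⟨r, hr | hr⟩
      · exfalso
        subst hr
        have key' : 2*(m*r*(2*c+1) + 2*m*P*r^2)
            = 2*((e+f+1)^2) - 1 - 2*(f^2+f-d01) - 2*d11 := by
          linear_combination keyB
        generalize m*r*(2*c+1) + 2*m*P*r^2 = A at key'
        generalize (e+f+1)^2 = B at key'
        generalize f^2 + f - d01 = F at key'
        omega
      · omega
    obtain ⟨r, rfl⟩ : ∃ r, v1 = 2*r + 1 := ⟨v1/2, by omega⟩
    refine ⟨⟨f, by ring⟩, by rw [← hP]; exact hP4, ⟨r, by rw [hPk, hP1]; ring⟩, ⟨f^2 + f - d01, by rw [hP1, hPk1]; linear_combination keyC⟩⟩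

/-! ### `z ≡ ± t` -/

lemma z_pm {k : ℕ} (hkk : 2 ≤ k) {m z t : ℤ} (hm : m % 2 = 1) (ht : t % 2 = 1)
    (hzc : ∃ c : ℤ, m*(z^2-1) = 2^(k-1) + 2^(k+1)*c)
    (htc : ∃ c : ℤ, m*(t^2-1) = 2^(k-1) + 2^(k+1)*c) :
    (2:ℤ)^k ∣ z - t ∨ (2:ℤ)^k ∣ z - (-t) := by
  obtain ⟨c1, hc1⟩ := hzc
  obtain ⟨c2, hc2⟩ := htc
  have hzodd : z % 2 = 1 := by
    rcases Int.even_or_odd' z with ⟨r, hr | hr⟩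
    · exfalso
      subst hr
      -- m*(4r²-1) = 2^{k-1} + 2^{k+1}c1, LHS odd
      have hP1 : (2:ℤ)^(k-1) = 2*2^(k-2) := by rw [← pow_succ']; congr 1; omega
      have hPk1 : (2:ℤ)^(k+1) = 8*2^(k-2) := by
        rw [show (8:ℤ) = 2^3 by norm_num, mul_comm, ← pow_add]; congr 1; omega
      rw [hP1, hPk1] at hc1
      have key : 4*(m*r^2) - m = 2*(2^(k-2)) + 8*(2^(k-2)*c1) := by linear_combination hc1
      generalize m*r^2 = A at key
      generalize (2:ℤ)^(k-2) = Q at key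
      generalize Q*c1 = R at key
      omega
    · omega
  -- 2^{k+1} ∣ m*(z²-t²)
  have hdm : (2:ℤ)^(k+1) ∣ m*(z^2 - t^2) := ⟨c1 - c2, by linear_combination hc1 - hc2⟩
  have hd : (2:ℤ)^(k+1) ∣ (z - t)*(z + t) :=
    (odd_coprime_pow m hm (k+1)).dvd_of_dvd_mul_left (by
      have : m * ((z-t)*(z+t)) = m*(z^2-t^2) := by ring
      rw [this]
      exact hdm)
  obtain ⟨g, hg⟩ : ∃ g, z = t + 2*g := ⟨(z-t)/2, by omega⟩
  subst hg
  have hd' : (2:ℤ)^(k-1) ∣ g*(g+t) := by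
    have h4 : (2:ℤ)^(k+1) = 2^(k-1)*4 := by
      rw [show (4:ℤ) = 2^2 by norm_num, ← pow_add]; congr 1; omega
    rw [h4] at hd
    obtain ⟨q, hq⟩ := hd
    refine ⟨q, ?_⟩
    have h4 : (4:ℤ)*(g*(g+t)) = 4*(2^(k-1)*q) := by linear_combination hq
    exact mul_left_cancel₀ (by norm_num : (4:ℤ) ≠ 0) h4
  have hpow : (2:ℤ)^(k-1+1) = 2^k := by congr 1; omega
  rcases consec_pow_dvd ht hd' with h | h
  · left
    rw [hpow] at h
    obtain ⟨q, hq⟩ := h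
    exact ⟨q, by linear_combination hq⟩
  · right
    rw [hpow] at h
    obtain ⟨q, hq⟩ := h
    exact ⟨q, by linear_combination hq⟩

/-! ### existence of square roots / of t₀ -/

lemma sqrt_mod_pow2 (u : ℤ) (hu : (8:ℤ) ∣ u - 1) :
    ∀ j : ℕ, 3 ≤ j → ∃ t : ℤ, t % 2 = 1 ∧ (2:ℤ)^j ∣ t^2 - u := by
  intro j hj
  induction j, hj using Nat.le_induction with
  | base =>
    refine ⟨1, by norm_num, ?_⟩
    obtain ⟨r, hr⟩ := hu
    exact ⟨-r, by norm_num; linear_combination -hr⟩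
  | succ j hj ih =>
    obtain ⟨t, ht, c, hc⟩ := ih
    rcases Int.even_or_odd' c with ⟨r, hr | hr⟩
    · subst hr
      exact ⟨t, ht, ⟨r, by rw [pow_succ]; linear_combination hc⟩⟩
    · subst hr
      obtain ⟨s, hs⟩ : ∃ s, t = 2*s + 1 := ⟨t/2, by omega⟩
      have q1 : (2:ℤ)^(j-1) = 4*2^(j-3) := by
        rw [show (4:ℤ) = 2^2 by norm_num, mul_comm, ← pow_add]; congr 1; omega
      have q2 : (2:ℤ)^j = 8*2^(j-3) := by
        rw [show (8:ℤ) = 2^3 by norm_num, mul_comm, ← pow_add]; congr 1; omega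
      have q3 : (2:ℤ)^(j+1) = 16*2^(j-3) := by
        rw [show (16:ℤ) = 2^4 by norm_num, mul_comm, ← pow_add]; congr 1; omega
      refine ⟨t + 2^(j-1), by omega, ?_⟩
      rw [q2] at hc
      rw [q1, q3]
      exact ⟨r + s + 1 + 2^(j-3), by linear_combination hc + 8*2^(j-3)*hs⟩

lemma exists_t {k : ℕ} (hk4 : 4 ≤ k) {m : ℤ} (hm : m % 2 = 1) :
    ∃ t : ℤ, t % 2 = 1 ∧ ∃ c : ℤ, m*(t^2-1) = 2^(k-1) + 2^(k+1)*c := by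
  obtain ⟨a, b, hab⟩ := odd_coprime_pow m hm (k+1)
  have h8 : (8:ℤ) ∣ (1 + 2^(k-1)*b) - 1 := by
    have hq : (2:ℤ)^(k-1) = 8*2^(k-4) := by
      rw [show (8:ℤ) = 2^3 by norm_num, mul_comm, ← pow_add]; congr 1; omega
    exact ⟨2^(k-4)*b, by rw [hq]; ring⟩
  obtain ⟨t, ht, c, hc⟩ := sqrt_mod_pow2 (1 + 2^(k-1)*b) h8 (k+1) (by omega)
  exact ⟨t, ht, ⟨m*c - 2^(k-1)*a, by linear_combination m*hc + 2^(k-1)*hab⟩⟩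

/-! ### verification of the explicit automorphisms -/

lemma ver_swap {m : ℤ} (hm4 : m % 4 = 3) (a s : ℤ) :
    (2:ℤ)^(1+2) ∣ 2^1*((a*0+s*1)^2 - a^2) - 2*m*((a*1+s*0)^2 - s^2) := by
  obtain ⟨c, hc⟩ : ∃ c, m = 4*c+3 := ⟨(m-3)/4, by omega⟩
  exact ⟨(s^2-a^2)*(c+1), by subst hc; ring⟩

lemma ver_T {k : ℕ} (hk3 : 3 ≤ k) {m t e c : ℤ} (hmt : m*t = 1 - 2*e)
    (hc : m*(t^2-1) = 2^(k-1) + 2^(k+1)*c) (a s : ℤ) :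
    (2:ℤ)^(k+2) ∣ 2^k*((a*1+s*1)^2 - a^2) - 2*m*((a*2^(k-1)+s*t)^2 - s^2) := by
  have q1 : (2:ℤ)^(k-1) = 4*2^(k-3) := by
    rw [show (4:ℤ) = 2^2 by norm_num, mul_comm, ← pow_add]; congr 1; omega
  have q2 : (2:ℤ)^k = 8*2^(k-3) := by
    rw [show (8:ℤ) = 2^3 by norm_num, mul_comm, ← pow_add]; congr 1; omega
  have q3 : (2:ℤ)^(k+1) = 16*2^(k-3) := by
    rw [show (16:ℤ) = 2^4 by norm_num, mul_comm, ← pow_add]; congr 1; omega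
  have q4 : (2:ℤ)^(k+2) = 32*2^(k-3) := by
    rw [show (32:ℤ) = 2^5 by norm_num, mul_comm, ← pow_add]; congr 1; omega
  rw [q1, q3] at hc
  rw [q1, q2, q4]
  exact ⟨a*s*e - m*2^(k-3)*a^2 - c*s^2,
    by linear_combination (-16*2^(k-3)*a*s)*hmt + (-2*s^2)*hc⟩


lemma eight_dvd_sq_sub_one {m : ℤ} (hm : m % 2 = 1) : (8:ℤ) ∣ m^2 - 1 := by
  obtain ⟨M, hM⟩ : ∃ M, m = 2*M + 1 := ⟨m/2, by omega⟩
  subst hM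
  rcases Int.even_or_odd' M with ⟨r, hr | hr⟩ <;> subst hr
  · exact ⟨2*r^2 + r, by ring⟩
  · exact ⟨2*r^2 + 3*r + 1, by ring⟩

lemma htt_of {k : ℕ} (hkk : 1 ≤ k) {m t c : ℤ} (hm : m % 2 = 1)
    (hc : m*(t^2-1) = 2^(k-1) + 2^(k+1)*c) :
    ∃ d : ℤ, 2^(k-1)*m + t^2 - 1 = 2^k*d := by
  obtain ⟨M', hM'⟩ := eight_dvd_sq_sub_one hm
  have p1 : (2:ℤ)^k = 2^(k-1)*2 := by rw [← pow_succ]; congr 1; omega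
  have p2 : (2:ℤ)^(k+1) = 2^(k-1)*4 := by
    rw [show (4:ℤ) = 2^2 by norm_num, ← pow_add]; congr 1; omega
  have hdvd : (2:ℤ)^k ∣ m * (2^(k-1)*m + t^2 - 1) := by
    rw [p1]
    refine ⟨1 + 4*M' + 2*c, ?_⟩
    rw [p2] at hc
    linear_combination hc + 2^(k-1)*hM'
  exact (odd_coprime_pow m hm k).dvd_of_dvd_mul_left hdvd

end OQ2NT

namespace OQ2NT

lemma not_pow_dvd_two {k : ℕ} (hkk : 2 ≤ k) : ¬ ((2:ℤ)^k ∣ 2) := by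
  intro h
  have h1 := Int.le_of_dvd (by norm_num) h
  have h2 : (2:ℤ)^2 ≤ 2^k := pow_le_pow_right₀ (by norm_num) hkk
  norm_num at h2
  linarith

lemma not_pow_dvd_half {k : ℕ} (hkk : 1 ≤ k) : ¬ ((2:ℤ)^k ∣ 2^(k-1)) := by
  intro h
  have h1 := Int.le_of_dvd (by positivity) h
  have h2 : (2:ℤ)^(k-1)*2 = 2^k := by rw [← pow_succ]; congr 1; omega
  nlinarith [pow_pos (by norm_num : (0:ℤ) < 2) (k-1)]

lemma not_pow_dvd_two_odd {k : ℕ} (hkk : 2 ≤ k) {t : ℤ} (ht : t % 2 = 1) :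
    ¬ ((2:ℤ)^k ∣ 2*t) := by
  intro h
  have hq : (2:ℤ)^k = 2*(2*2^(k-2)) := by
    rw [show (2:ℤ)*(2*2^(k-2)) = 2^(k-2)*2^2 by ring, ← pow_add]
    congr 1
    omega
  obtain ⟨cc, hcc⟩ := h
  rw [hq] at hcc
  have ht2 : t = 2*(2^(k-2)*cc) := mul_left_cancel₀ (by norm_num : (2:ℤ) ≠ 0)
    (by linear_combination hcc)
  generalize (2:ℤ)^(k-2)*cc = A at ht2
  omega

end OQ2NT

set_option synthInstance.maxHeartbeats 1000000

namespace OQ2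

section basicsec

variable (N k m : ℕ)

/-- the element `(a mod 2, m*s mod N)` of the ambient group. -/
def mkv (a s : ℤ) : ZMod 2 × ZMod N := ((a : ZMod 2), (((m : ℤ) * s : ℤ) : ZMod N))

variable {N k m} (hN : N = 2 ^ k * m) (hk : 1 ≤ k) (hm : m % 2 = 1)

include hN hk in
lemma mkv_mem (a s : ℤ) : mkv N m a s ∈ primaryPart 2 (ZMod 2 × ZMod N) := by
  refine ⟨k, Prod.ext ?_ ?_⟩
  · show (2:ℕ)^k • ((a : ZMod 2)) = 0
    rw [nsmul_eq_mul, show (((2:ℕ)^k : ℕ) : ZMod 2) * (a : ZMod 2) = (((2^k * a : ℤ)) : ZMod 2) by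
      push_cast; ring]
    rw [ZMod.intCast_zmod_eq_zero_iff_dvd]
    exact Dvd.dvd.mul_right (dvd_pow_self (2:ℤ) (by omega)) a
  · show (2:ℕ)^k • (((m:ℤ) * s : ℤ) : ZMod N) = 0
    rw [nsmul_eq_mul, show (((2:ℕ)^k : ℕ) : ZMod N) * (((m:ℤ) * s : ℤ) : ZMod N)
        = (((2^k * (m * s) : ℤ)) : ZMod N) by push_cast; ring]
    rw [ZMod.intCast_zmod_eq_zero_iff_dvd]
    exact ⟨s, by push_cast [hN]; ring⟩

/-- the element `(a mod 2, m*s mod N)` of the 2-primary part. -/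
def mkG (a s : ℤ) : primaryPart 2 (ZMod 2 × ZMod N) := ⟨mkv N m a s, mkv_mem hN hk a s⟩

lemma mkG_coe (a s : ℤ) : (mkG hN hk a s : ZMod 2 × ZMod N) = mkv N m a s := rfl

lemma mkG_add (a s a' s' : ℤ) :
    mkG hN hk a s + mkG hN hk a' s' = mkG hN hk (a + a') (s + s') := by
  apply Subtype.ext
  show mkv N m a s + mkv N m a' s' = mkv N m (a + a') (s + s')
  unfold mkv
  rw [Prod.mk_add_mk, Prod.mk.injEq]
  constructor <;> · push_cast; ring

lemma mkG_zsmul (c a s : ℤ) : c • mkG hN hk a s = mkG hN hk (c * a) (c * s) := by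
  apply Subtype.ext
  show c • mkv N m a s = mkv N m (c * a) (c * s)
  unfold mkv
  rw [Prod.smul_mk, Prod.mk.injEq]
  constructor <;> · rw [zsmul_eq_mul]; push_cast; ring_nf

lemma mkG_zero : mkG hN hk 0 0 = (0 : primaryPart 2 (ZMod 2 × ZMod N)) := by
  apply Subtype.ext
  show mkv N m 0 0 = 0
  simp [mkv]

include hm in
lemma mkG_eq_iff (a s a' s' : ℤ) :
    mkG hN hk a s = mkG hN hk a' s' ↔ ((2:ℤ) ∣ a - a' ∧ (2^k : ℤ) ∣ s - s') := by
  have hm0 : (m:ℤ) ≠ 0 := by exact_mod_cast (by omega : m ≠ 0)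
  rw [Subtype.ext_iff]
  show mkv N m a s = mkv N m a' s' ↔ _
  unfold mkv
  rw [Prod.mk.injEq]
  rw [ZMod.intCast_eq_intCast_iff', ZMod.intCast_eq_intCast_iff']
  constructor
  · rintro ⟨h1, h2⟩
    refine ⟨by omega, ?_⟩
    have h3 : (N:ℤ) ∣ (m:ℤ) * s' - (m:ℤ) * s := Int.ModEq.dvd h2
    have h4 : ((m:ℤ) * 2^k) ∣ (m:ℤ) * (s' - s) := by
      obtain ⟨c, hc⟩ := h3
      exact ⟨c, by rw [mul_sub, hc]; push_cast [hN]; ring⟩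
    have := (mul_dvd_mul_iff_left hm0).mp h4
    exact (dvd_sub_comm).mp this
  · rintro ⟨h1, h2⟩
    constructor
    · omega
    · apply Int.ModEq.symm
      apply Int.modEq_iff_dvd.mpr
      obtain ⟨c, hc⟩ := h2
      refine ⟨c, ?_⟩
      have : (m:ℤ) * s - m * s' = (m:ℤ) * (2^k * c) := by rw [← hc]; ring
      rw [this]
      push_cast [hN]
      ring


include hN hm in
lemma NneZero : N ≠ 0 := by
  have : m ≠ 0 := by omega
  have : 2^k ≠ 0 := by positivity
  simp [hN]; omega

include hN hk hm in
lemma mkG_surj (x : primaryPart 2 (ZMod 2 × ZMod N)) : ∃ a s : ℤ, x = mkG hN hk a s := by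
  haveI : NeZero N := ⟨NneZero hN hm⟩
  obtain ⟨⟨p, q⟩, j, hj⟩ := x
  have h2 : (2:ℕ)^j • q = 0 := congrArg Prod.snd hj
  have h3 : ((2^j * q.val : ℕ) : ZMod N) = 0 := by
    rw [Nat.cast_mul, ZMod.natCast_val, ZMod.cast_id, ← nsmul_eq_mul]
    exact h2
  have h4 : N ∣ 2^j * q.val := (ZMod.natCast_eq_zero_iff _ _).mp h3
  have h5 : m ∣ 2^j * q.val := dvd_trans ⟨2^k, by rw [hN]; ring⟩ h4
  have hcop : Nat.Coprime m (2^j) := Nat.Coprime.pow_right j (by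
    rw [Nat.coprime_comm]
    exact Nat.coprime_two_left.mpr (Nat.odd_iff.mpr hm))
  have h6 : m ∣ q.val := (Nat.Coprime.dvd_of_dvd_mul_left hcop h5)
  obtain ⟨t, ht⟩ := h6
  refine ⟨p.val, t, ?_⟩
  apply Subtype.ext
  show (p, q) = mkv N m (p.val) (t)
  unfold mkv
  rw [Prod.mk.injEq]
  constructor
  · rw [Int.cast_natCast, ZMod.natCast_val, ZMod.cast_id]
  · rw [show ((m:ℤ) * (t:ℤ) : ℤ) = ((m * t : ℕ) : ℤ) by push_cast; ring]
    rw [Int.cast_natCast, ← ht, ZMod.natCast_val, ZMod.cast_id]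

lemma map_zsmul'' {A B : Type*} [AddCommGroup A] [AddCommGroup B] (g : A ≃+ B) (c : ℤ)
    (x : A) : g (c • x) = c • g x := map_zsmul g c x

section apply

variable {P : AddSubgroup (ZMod 2 × ZMod N)} (g : primaryPart 2 (ZMod 2 × ZMod N) ≃+ primaryPart 2 (ZMod 2 × ZMod N))

lemma mkG_decomp (a s : ℤ) :
    mkG hN hk a s = a • mkG hN hk 1 0 + s • mkG hN hk 0 1 := by
  rw [mkG_zsmul, mkG_zsmul, mkG_add]
  norm_num

lemma g_apply {u v w z : ℤ} (hu : g (mkG hN hk 1 0) = mkG hN hk u v)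
    (hw : g (mkG hN hk 0 1) = mkG hN hk w z) (a s : ℤ) :
    g (mkG hN hk a s) = mkG hN hk (a * u + s * w) (a * v + s * z) := by
  rw [mkG_decomp, AddEquiv.map_add g, map_zsmul'' g, map_zsmul'' g, hu, hw, mkG_zsmul, mkG_zsmul, mkG_add]

include hm in
lemma g_ext (g' : primaryPart 2 (ZMod 2 × ZMod N) ≃+ primaryPart 2 (ZMod 2 × ZMod N))
    (he : g (mkG hN hk 1 0) = g' (mkG hN hk 1 0)) (hf : g (mkG hN hk 0 1) = g' (mkG hN hk 0 1)) :
    g = g' := by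
  apply DFunLike.ext
  intro x
  obtain ⟨a, s, rfl⟩ := mkG_surj hN hk hm x
  rw [mkG_decomp, AddEquiv.map_add g, AddEquiv.map_add g', map_zsmul'' g, map_zsmul'' g, map_zsmul'' g', map_zsmul'' g', he, hf]

include hk hm in
lemma torsion_e {u v : ℤ} (hu : g (mkG hN hk 1 0) = mkG hN hk u v) :
    ∃ v1 : ℤ, v = 2^(k-1) * v1 := by
  have h1 : (2:ℤ) • mkG hN hk 1 0 = 0 := by
    rw [mkG_zsmul, mul_one, mul_zero, ← mkG_zero hN hk]
    rw [mkG_eq_iff hN hk hm]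
    exact ⟨⟨1, by ring⟩, ⟨0, by ring⟩⟩
  have h2 : (2:ℤ) • mkG hN hk u v = 0 := by
    rw [← hu, ← map_zsmul'' g, h1, map_zero]
  rw [mkG_zsmul, ← mkG_zero hN hk] at h2
  obtain ⟨c, hc⟩ := ((mkG_eq_iff hN hk hm _ _ _ _).mp h2).2
  have hpow : (2:ℤ)^k = 2^(k-1) * 2 := by rw [← pow_succ]; congr 1; omega
  exact ⟨c, by rw [hpow] at hc; linarith⟩

end apply


end basicsec

lemma normalize_dvd (M X Y n : ℤ) (k : ℕ) (hM : M ≠ 0) (hn : n = 2^k * M) :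
    (4*n ∣ n*X - 2*M^2*Y) ↔ ((2:ℤ)^(k+2) ∣ 2^k*X - 2*M*Y) := by
  subst hn
  rw [show 4*(2^k*M) = M*2^(k+2) by ring, show (2^k*M)*X - 2*M^2*Y = M*(2^k*X - 2*M*Y) by ring,
    mul_dvd_mul_iff_left hM]

lemma sq_cong_two {α A : ℤ} (h : (2:ℤ) ∣ α - A) : (4:ℤ) ∣ α^2 - A^2 := by
  obtain ⟨c, hc⟩ := h
  exact ⟨A*c + c^2, by linear_combination (α + A + 2*c) * hc⟩

lemma sq_cong_N {β B H : ℤ} (h : (2*H) ∣ β - B) : 2*(2*H) ∣ β^2 - B^2 := by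
  obtain ⟨c, hc⟩ := h
  exact ⟨c*(H*c + B), by linear_combination (β + B + 2*H*c) * hc⟩

section bridge

variable (n : ℤ) {k m : ℕ} (hN : n.toNat = 2 ^ k * m) (hk : 1 ≤ k) (hm : m % 2 = 1)
  (hn : 0 < n)
  (g : primaryPart 2 (ZMod 2 × ZMod n.toNat) ≃+ primaryPart 2 (ZMod 2 × ZMod n.toNat))
  {u v w z : ℤ}

include hm hn in
lemma QPres2_iff (hu : g (mkG hN hk 1 0) = mkG hN hk u v)
    (hw : g (mkG hN hk 0 1) = mkG hN hk w z) :
    QPres2 n g ↔ ∀ a s : ℤ,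
      (2:ℤ)^(k+2) ∣ 2^k * ((a*u+s*w)^2 - a^2) - 2*(m:ℤ)*((a*v+s*z)^2 - s^2) := by
  have hM : ((m:ℤ)) ≠ 0 := by exact_mod_cast (by omega : m ≠ 0)
  have hnN : ((n.toNat : ℤ)) = n := Int.toNat_of_nonneg hn.le
  have hnZ : n = 2^k * (m:ℤ) := by rw [← hnN]; push_cast [hN]; ring
  have h2H : ((n.toNat : ℤ)) = 2 * (2^(k-1) * m) := by
    rw [← hnN] at hnZ
    rw [hnZ]
    rw [show (2:ℤ)^k = 2^(k-1)*2 by rw [← pow_succ]; congr 1; omega]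
    ring
  constructor
  · intro hQ a s
    have hg := g_apply hN hk g hu hw a s
    have := hQ (mkG hN hk a s) a ((m:ℤ)*s) (a*u+s*w) ((m:ℤ)*(a*v+s*z)) rfl rfl
      (by rw [hg]; rfl) (by rw [hg]; rfl)
    rw [show n * ((a*u+s*w) ^ 2 - a ^ 2) - 2 * (((m:ℤ)*(a*v+s*z)) ^ 2 - ((m:ℤ)*s) ^ 2)
      = n * ((a*u+s*w) ^ 2 - a ^ 2) - 2*(m:ℤ)^2*((a*v+s*z)^2 - s^2) by ring] at this
    exact (normalize_dvd (m:ℤ) _ _ n k hM hnZ).mp this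
  · intro hC x α β α' β' h1 h2 h3 h4
    obtain ⟨a, s, rfl⟩ := mkG_surj hN hk hm x
    have hg := g_apply hN hk g hu hw a s
    rw [hg] at h3 h4
    -- congruences between the given representatives and the canonical ones
    have c1 : (2:ℤ) ∣ α - a := by
      have := (ZMod.intCast_eq_intCast_iff' α a 2).mp h1
      omega
    have c3 : (2:ℤ) ∣ α' - (a*u+s*w) := by
      have := (ZMod.intCast_eq_intCast_iff' α' (a*u+s*w) 2).mp h3
      omega
    have c2 : ((n.toNat:ℤ)) ∣ β - (m:ℤ)*s := by
      have := (ZMod.intCast_eq_intCast_iff' β ((m:ℤ)*s) n.toNat).mp h2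
      exact Int.ModEq.dvd this.symm
    have c4 : ((n.toNat:ℤ)) ∣ β' - (m:ℤ)*(a*v+s*z) := by
      have := (ZMod.intCast_eq_intCast_iff' β' ((m:ℤ)*(a*v+s*z)) n.toNat).mp h4
      exact Int.ModEq.dvd this.symm
    have d1 : (4:ℤ) ∣ α^2 - a^2 := sq_cong_two c1
    have d3 : (4:ℤ) ∣ α'^2 - (a*u+s*w)^2 := sq_cong_two c3
    have d2 : 2*((n.toNat:ℤ)) ∣ β^2 - ((m:ℤ)*s)^2 := by
      rw [h2H] at c2 ⊢; exact sq_cong_N c2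
    have d4 : 2*((n.toNat:ℤ)) ∣ β'^2 - ((m:ℤ)*(a*v+s*z))^2 := by
      rw [h2H] at c4 ⊢; exact sq_cong_N c4
    have hC' : 4*n ∣ n * ((a*u+s*w) ^ 2 - a ^ 2) - 2*(m:ℤ)^2*((a*v+s*z)^2 - s^2) :=
      (normalize_dvd (m:ℤ) _ _ n k hM hnZ).mpr (hC a s)
    rw [hnN] at d2 d4
    obtain ⟨c0, hc0⟩ := hC'
    obtain ⟨c1', hc1⟩ := d1
    obtain ⟨c3', hc3⟩ := d3
    obtain ⟨c2', hc2⟩ := d2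
    obtain ⟨c4', hc4⟩ := d4
    refine ⟨c0 + c3' - c1' - c4' + c2', ?_⟩
    have hs : n * (α' ^ 2 - α ^ 2) - 2 * (β' ^ 2 - β ^ 2)
        = (n * ((a*u+s*w) ^ 2 - a ^ 2) - 2*(m:ℤ)^2*((a*v+s*z)^2 - s^2))
          + n*(α'^2 - (a*u+s*w)^2) - n*(α^2 - a^2)
          - 2*(β'^2 - ((m:ℤ)*(a*v+s*z))^2) + 2*(β^2 - ((m:ℤ)*s)^2) := by ring
    rw [hs, hc0, hc1, hc3, hc2, hc4]
    ring

end bridge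


section expl

variable {N k m : ℕ} (hN : N = 2 ^ k * m) (hk : 1 ≤ k) (hm : m % 2 = 1)

lemma map_primary (F : (ZMod 2 × ZMod N) →+ (ZMod 2 × ZMod N)) {x : ZMod 2 × ZMod N}
    (hx : x ∈ primaryPart 2 (ZMod 2 × ZMod N)) : F x ∈ primaryPart 2 (ZMod 2 × ZMod N) := by
  obtain ⟨j, hj⟩ := hx
  exact ⟨j, by rw [← map_nsmul, hj, map_zero]⟩

/-- restriction of an ambient endomorphism which is involutive on the 2-primary part. -/
def involEquiv (F : (ZMod 2 × ZMod N) →+ (ZMod 2 × ZMod N))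
    (hFF : ∀ x ∈ primaryPart 2 (ZMod 2 × ZMod N), F (F x) = x) :
    primaryPart 2 (ZMod 2 × ZMod N) ≃+ primaryPart 2 (ZMod 2 × ZMod N) where
  toFun x := ⟨F x, map_primary F x.2⟩
  invFun x := ⟨F x, map_primary F x.2⟩
  left_inv x := Subtype.ext (hFF x x.2)
  right_inv x := Subtype.ext (hFF x x.2)
  map_add' x y := Subtype.ext (F.map_add x y)

lemma involEquiv_coe (F : (ZMod 2 × ZMod N) →+ (ZMod 2 × ZMod N))
    (hFF : ∀ x ∈ primaryPart 2 (ZMod 2 × ZMod N), F (F x) = x)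
    (x : primaryPart 2 (ZMod 2 × ZMod N)) :
    (involEquiv F hFF x : ZMod 2 × ZMod N) = F x := rfl

lemma involEquiv_invol (F : (ZMod 2 × ZMod N) →+ (ZMod 2 × ZMod N))
    (hFF : ∀ x ∈ primaryPart 2 (ZMod 2 × ZMod N), F (F x) = x)
    (x : primaryPart 2 (ZMod 2 × ZMod N)) :
    involEquiv F hFF (involEquiv F hFF x) = x := Subtype.ext (hFF x x.2)

include hN hk hm in
lemma mkv_eq_of {a s a' s' : ℤ} (h1 : (2:ℤ) ∣ a - a') (h2 : (2^k:ℤ) ∣ s - s') :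
    mkv N m a s = mkv N m a' s' := by
  have := (mkG_eq_iff hN hk hm a s a' s').mpr ⟨h1, h2⟩
  exact congrArg Subtype.val this

include hN hk hm in
lemma mem_ex {x : ZMod 2 × ZMod N} (hx : x ∈ primaryPart 2 (ZMod 2 × ZMod N)) :
    ∃ a s : ℤ, x = mkv N m a s := by
  obtain ⟨a, s, h⟩ := mkG_surj hN hk hm ⟨x, hx⟩
  exact ⟨a, s, congrArg Subtype.val h⟩

/-- negation in the second component. -/
def Fneg : (ZMod 2 × ZMod N) →+ (ZMod 2 × ZMod N) :=
  AddMonoidHom.mk' (fun x => (x.1, -x.2)) (by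
    intro a b
    rw [Prod.ext_iff]
    constructor <;> simp <;> ring)

lemma Fneg_mkv (a s : ℤ) : Fneg (mkv N m a s) = mkv N m a (-s) := by
  show ((mkv N m a s).1, -(mkv N m a s).2) = _
  unfold mkv
  rw [Prod.mk.injEq]
  exact ⟨rfl, by push_cast; ring⟩

/-- the swap automorphism for `k = 1`. -/
def Fswap (hdvd : (2:ℕ) ∣ N) (hc : ((2:ℤ) : ZMod N) * ((m:ℕ) : ZMod N) = 0) :
    (ZMod 2 × ZMod N) →+ (ZMod 2 × ZMod N) :=
  AddMonoidHom.mk'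
    (fun x => ((ZMod.castHom hdvd (ZMod 2)) x.2,
      (ZMod.lift 2 ⟨zmultiplesHom _ ((m:ℕ) : ZMod N), by
        rw [zmultiplesHom_apply, zsmul_eq_mul]; exact_mod_cast hc⟩) x.1))
    (by
      intro a b
      rw [Prod.ext_iff]
      constructor <;> simp [map_add])

lemma Fswap_mkv (hdvd : (2:ℕ) ∣ N) (hc : ((2:ℤ) : ZMod N) * ((m:ℕ) : ZMod N) = 0) (a s : ℤ) :
    Fswap hdvd hc (mkv N m a s) = mkv N m ((m:ℤ)*s) a := by
  unfold Fswap mkv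
  rw [AddMonoidHom.mk'_apply, Prod.mk.injEq]
  constructor
  · exact map_intCast (ZMod.castHom hdvd (ZMod 2)) _
  · show (ZMod.lift 2 _) ((a : ℤ) : ZMod 2) = _
    rw [ZMod.lift_coe]
    show a • (((m:ℕ) : ZMod N)) = _
    rw [zsmul_eq_mul]
    push_cast
    ring

/-- the automorphisms `e ↦ e + 2^(k-1) f`, `f ↦ e + t f` for `k ≥ 4`. -/
def Ft (t : ℤ) (hdvd : (2:ℕ) ∣ N) (hc : ((2:ℤ) : ZMod N) * (((2^(k-1)*m :ℕ)) : ZMod N) = 0) :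
    (ZMod 2 × ZMod N) →+ (ZMod 2 × ZMod N) :=
  AddMonoidHom.mk'
    (fun x => (x.1 + (ZMod.castHom hdvd (ZMod 2)) x.2,
      (ZMod.lift 2 ⟨zmultiplesHom _ (((2^(k-1)*m :ℕ)) : ZMod N), by
        rw [zmultiplesHom_apply, zsmul_eq_mul]; exact_mod_cast hc⟩) x.1 + t • x.2))
    (by
      intro a b
      rw [Prod.ext_iff]
      constructor <;> · simp [map_add, smul_add]; ring)

lemma Ft_mkv (t : ℤ) (hdvd : (2:ℕ) ∣ N) (hc : ((2:ℤ) : ZMod N) * (((2^(k-1)*m :ℕ)) : ZMod N) = 0)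
    (a s : ℤ) :
    Ft t hdvd hc (mkv N m a s) = mkv N m (a + (m:ℤ)*s) (2^(k-1)*a + t*s) := by
  unfold Ft mkv
  rw [AddMonoidHom.mk'_apply, Prod.mk.injEq]
  constructor
  · rw [map_intCast (ZMod.castHom hdvd (ZMod 2))]
    push_cast
    ring
  · show (ZMod.lift 2 _) ((a : ℤ) : ZMod 2) + t • _ = _
    rw [ZMod.lift_coe]
    show a • ((((2^(k-1)*m : ℕ)) : ZMod N)) + t • _ = _
    rw [zsmul_eq_mul, zsmul_eq_mul]
    push_cast
    ring


include hN hk in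
lemma hdvdN : (2:ℕ) ∣ N := by
  rw [hN]
  exact Dvd.dvd.mul_right (dvd_pow_self 2 (by omega)) m

include hN hk in
lemma pow_k_split : (2:ℤ)^k = 2^(k-1)*2 := by
  rw [← pow_succ]
  congr 1
  omega

/-- the negation automorphism. -/
def gNeg : primaryPart 2 (ZMod 2 × ZMod N) ≃+ primaryPart 2 (ZMod 2 × ZMod N) :=
  involEquiv Fneg (by
    intro x hx
    obtain ⟨a, s, rfl⟩ := mem_ex hN hk hm hx
    rw [Fneg_mkv, Fneg_mkv, neg_neg])

lemma gNeg_invol (x : primaryPart 2 (ZMod 2 × ZMod N)) :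
    gNeg hN hk hm (gNeg hN hk hm x) = x := involEquiv_invol _ _ x

lemma gNeg_e : gNeg hN hk hm (mkG hN hk 1 0) = mkG hN hk 1 0 := by
  apply Subtype.ext
  show Fneg (mkv N m 1 0) = mkv N m 1 0
  rw [Fneg_mkv]
  norm_num

lemma gNeg_f : gNeg hN hk hm (mkG hN hk 0 1) = mkG hN hk 0 (-1) :=
  Subtype.ext (Fneg_mkv 0 1)

section swap

variable (hk1 : k = 1)

include hN hk1 in
lemma swap_hc : ((2:ℤ) : ZMod N) * ((m:ℕ) : ZMod N) = 0 := by
  have h : ((2:ℤ) : ZMod N) * ((m:ℕ) : ZMod N) = (((2 * m : ℕ) : ℤ) : ZMod N) := by push_cast; ring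
  rw [h, ZMod.intCast_zmod_eq_zero_iff_dvd]
  exact_mod_cast (by rw [hN, hk1, pow_one] : N ∣ 2*m)


include hm in
lemma m_cong : ∃ c : ℤ, (m:ℤ) = 2*c + 1 :=
  ⟨((m/2 : ℕ) : ℤ), by exact_mod_cast (by omega : m = 2*(m/2)+1)⟩

/-- the swap automorphism (`k = 1` only). -/
def gSwap : primaryPart 2 (ZMod 2 × ZMod N) ≃+ primaryPart 2 (ZMod 2 × ZMod N) :=
  involEquiv (Fswap (hdvdN hN hk) (swap_hc hN hk1)) (by
    intro x hx
    obtain ⟨a, s, rfl⟩ := mem_ex hN hk hm hx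
    rw [Fswap_mkv, Fswap_mkv]
    obtain ⟨c, hc⟩ := m_cong hm
    apply mkv_eq_of hN hk hm
    · exact ⟨c * a, by rw [hc]; ring⟩
    · rw [hk1, pow_one]
      exact ⟨c * s, by rw [hc]; ring⟩)

lemma gSwap_invol (x : primaryPart 2 (ZMod 2 × ZMod N)) :
    gSwap hN hk hm hk1 (gSwap hN hk hm hk1 x) = x := involEquiv_invol _ _ x

lemma gSwap_e : gSwap hN hk hm hk1 (mkG hN hk 1 0) = mkG hN hk 0 1 := by
  apply Subtype.ext
  show Fswap _ _ (mkv N m 1 0) = mkv N m 0 1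
  rw [Fswap_mkv]
  apply mkv_eq_of hN hk hm
  · exact ⟨0, by ring⟩
  · exact ⟨0, by ring⟩

lemma gSwap_f : gSwap hN hk hm hk1 (mkG hN hk 0 1) = mkG hN hk 1 0 := by
  apply Subtype.ext
  show Fswap _ _ (mkv N m 0 1) = mkv N m 1 0
  rw [Fswap_mkv]
  obtain ⟨c, hc⟩ := m_cong hm
  apply mkv_eq_of hN hk hm
  · exact ⟨c, by rw [hc]; ring⟩
  · exact ⟨0, by ring⟩

end swap

section tsec

variable (t : ℤ) (hk2 : 2 ≤ k) (ht : ∃ t1 : ℤ, t + 1 = 2*t1)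
  (htt : ∃ c : ℤ, 2^(k-1)*(m:ℤ) + t^2 - 1 = 2^k * c)

include hN hk in
lemma t_hc : ((2:ℤ) : ZMod N) * (((2^(k-1)*m : ℕ)) : ZMod N) = 0 := by
  have h : ((2:ℤ) : ZMod N) * (((2^(k-1)*m : ℕ)) : ZMod N) = (((2 * (2^(k-1)*m) : ℕ) : ℤ) : ZMod N) := by
    push_cast; ring
  rw [h, ZMod.intCast_zmod_eq_zero_iff_dvd]
  have h2 : ((2 * (2^(k-1)*m) : ℕ) : ℤ) = (N : ℤ) := by
    push_cast [hN]
    rw [pow_k_split hN hk]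
    ring
  rw [h2]

/-- the extra automorphisms in the `n ≡ 0 mod 16` case. -/
def gT : primaryPart 2 (ZMod 2 × ZMod N) ≃+ primaryPart 2 (ZMod 2 × ZMod N) :=
  involEquiv (Ft t (hdvdN hN hk) (t_hc hN hk)) (by
    intro x hx
    obtain ⟨a, s, rfl⟩ := mem_ex hN hk hm hx
    rw [Ft_mkv, Ft_mkv]
    obtain ⟨t1, ht1⟩ := ht
    obtain ⟨c, hc⟩ := htt
    have hp := pow_k_split hN hk
    have hp2 : (2:ℤ)^(k-1) = 2^(k-2)*2 := by
      rw [← pow_succ]; congr 1; omega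
    apply mkv_eq_of hN hk hm
    · refine ⟨(m:ℤ)*s*t1 + 2^(k-2)*(m:ℤ)*a, ?_⟩
      rw [hp2]
      linear_combination (m:ℤ)*s*ht1
    · refine ⟨a*t1 + s*c, ?_⟩
      rw [hp] at hc ⊢
      linear_combination 2^(k-1)*a*ht1 + s*hc)

lemma gT_invol (x : primaryPart 2 (ZMod 2 × ZMod N)) :
    gT hN hk hm t hk2 ht htt (gT hN hk hm t hk2 ht htt x) = x := involEquiv_invol _ _ x

lemma gT_e : gT hN hk hm t hk2 ht htt (mkG hN hk 1 0) = mkG hN hk 1 (2^(k-1)) := by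
  apply Subtype.ext
  show Ft t _ _ (mkv N m 1 0) = mkv N m 1 (2^(k-1))
  rw [Ft_mkv]
  norm_num

lemma gT_f : gT hN hk hm t hk2 ht htt (mkG hN hk 0 1) = mkG hN hk 1 t := by
  apply Subtype.ext
  show Ft t _ _ (mkv N m 0 1) = mkv N m 1 t
  rw [Ft_mkv]
  obtain ⟨d, hd⟩ := m_cong hm
  apply mkv_eq_of hN hk hm
  · exact ⟨d, by rw [hd]; ring⟩
  · exact ⟨0, by ring⟩

end tsec

end expl

end OQ2



open OQ2 OQ2NT in
theorem order_Oq2_of_two_oplus_neg_n_aux (n : ℤ) (hn : 0 < n) (heven : 2 ∣ n) :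
    (n % 8 = 2 →
      Nat.card {g : primaryPart 2 (ZMod 2 × ZMod n.toNat) ≃+
          primaryPart 2 (ZMod 2 × ZMod n.toNat) // QPres2 n g} = 1) ∧
    (n % 16 = 0 →
      Nat.card {g : primaryPart 2 (ZMod 2 × ZMod n.toNat) ≃+
          primaryPart 2 (ZMod 2 × ZMod n.toNat) // QPres2 n g} = 4 ∧
      ∀ g : primaryPart 2 (ZMod 2 × ZMod n.toNat) ≃+
          primaryPart 2 (ZMod 2 × ZMod n.toNat),
        QPres2 n g → ∀ x, g (g x) = x) ∧
    ((n % 8 = 4 ∨ n % 8 = 6 ∨ n % 16 = 8) →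
      Nat.card {g : primaryPart 2 (ZMod 2 × ZMod n.toNat) ≃+
          primaryPart 2 (ZMod 2 × ZMod n.toNat) // QPres2 n g} = 2) := by
  have hN0 : n.toNat ≠ 0 := by omega
  obtain ⟨k, m, hm2, hN⟩ := Nat.exists_eq_pow_mul_and_not_dvd hN0 2 (by norm_num)
  have hm : m % 2 = 1 := by omega
  have hnN : ((n.toNat : ℤ)) = n := Int.toNat_of_nonneg hn.le
  have hk : 1 ≤ k := by
    rcases Nat.eq_zero_or_pos k with rfl | h
    · rw [pow_zero, one_mul] at hN
      omega
    · exact h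
  have hmZ : (m:ℤ) % 2 = 1 := by omega
  -- determination of k from the congruence class of n
  have hdet : (n.toNat % 8 = 2 → k = 1 ∧ m % 4 = 1) ∧
      (n.toNat % 8 = 6 → k = 1 ∧ m % 4 = 3) ∧
      (n.toNat % 8 = 4 → k = 2) ∧
      (n.toNat % 16 = 8 → k = 3) ∧
      (n.toNat % 16 = 0 → 4 ≤ k) := by
    rcases Nat.lt_or_ge k 4 with hlt | hge
    · interval_cases k <;> (norm_num at hN; omega)
    · obtain ⟨E, hE⟩ : ∃ E, 2^k = 16*E :=
        ⟨2^(k-4), by rw [show (16:ℕ) = 2^4 by norm_num, ← pow_add]; congr 1; omega⟩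
      have h16 : n.toNat = 16*(E*m) := by rw [hN, hE]; ring
      generalize E*m = Q at h16
      exact ⟨by omega, by omega, by omega, by omega, fun _ => hge⟩
  -- the extraction of normalized data from an automorphism preserving q₂
  have extract : ∀ g : primaryPart 2 (ZMod 2 × ZMod n.toNat) ≃+
      primaryPart 2 (ZMod 2 × ZMod n.toNat), QPres2 n g → ∃ u v w z : ℤ,
      g (mkG hN hk 1 0) = mkG hN hk u v ∧ g (mkG hN hk 0 1) = mkG hN hk w z ∧
      ((2:ℤ)^(k-1) ∣ v) ∧
      ((2:ℤ)^(k+2) ∣ 2^k*(u^2-1) - 2*(m:ℤ)*v^2) ∧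
      ((2:ℤ)^(k+2) ∣ 2^k*w^2 - 2*(m:ℤ)*(z^2-1)) ∧
      ((2:ℤ)^(k+2) ∣ 2^k*((u+w)^2-1) - 2*(m:ℤ)*((v+z)^2-1)) := by
    intro g hg
    obtain ⟨u, v, hu⟩ := mkG_surj hN hk hm (g (mkG hN hk 1 0))
    obtain ⟨w, z, hw⟩ := mkG_surj hN hk hm (g (mkG hN hk 0 1))
    have hC := (QPres2_iff n hN hk hm hn g hu hw).mp hg
    refine ⟨u, v, w, z, hu, hw, ?_, ?_, ?_, ?_⟩
    · obtain ⟨v1, hv1⟩ := torsion_e hN hk hm g hu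
      exact ⟨v1, hv1⟩
    · obtain ⟨q, hq⟩ := hC 1 0
      exact ⟨q, by linear_combination hq⟩
    · obtain ⟨q, hq⟩ := hC 0 1
      exact ⟨q, by linear_combination hq⟩
    · obtain ⟨q, hq⟩ := hC 1 1
      exact ⟨q, by linear_combination hq⟩
  have hQrefl : QPres2 n (AddEquiv.refl _) :=
    (QPres2_iff n hN hk hm hn _ rfl rfl).mpr (fun a s => ⟨0, by ring⟩)
  have himg : ∀ (g1 g2 : primaryPart 2 (ZMod 2 × ZMod n.toNat) ≃+
      primaryPart 2 (ZMod 2 × ZMod n.toNat)) (x), g1 = g2 → g1 x = g2 x :=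
    fun _ _ x h => by rw [h]
  refine ⟨?_, ?_, ?_⟩
  · -- n ≡ 2 mod 8 : trivial group
    intro h8
    obtain ⟨hk1, hm41⟩ := hdet.1 (by omega)
    apply card_eq_one_of (AddEquiv.refl _) hQrefl
    intro g hg
    obtain ⟨u, v, w, z, hu, hw, hv, h10, h01, h11⟩ := extract g hg
    rw [hk1] at h10 h01
    have h10' : (4:ℤ) ∣ u^2 - 1 - (m:ℤ)*v^2 := by
      obtain ⟨q, hq⟩ := h10
      exact ⟨q, mul_left_cancel₀ (by norm_num : (2:ℤ) ≠ 0) (by linear_combination hq)⟩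
    have h01' : (4:ℤ) ∣ w^2 - (m:ℤ)*(z^2-1) := by
      obtain ⟨q, hq⟩ := h01
      exact ⟨q, mul_left_cancel₀ (by norm_num : (2:ℤ) ≠ 0) (by linear_combination hq)⟩
    obtain ⟨d1, d2, d3, d4⟩ := class_k1_m1 (by omega : (m:ℤ) % 4 = 1) h10' h01'
    apply g_ext hN hk hm g (AddEquiv.refl _)
    · rw [hu]
      exact (mkG_eq_iff hN hk hm u v 1 0).mpr ⟨d1, by rw [hk1, pow_one]; simpa using d2⟩
    · rw [hw]
      exact (mkG_eq_iff hN hk hm w z 0 1).mpr ⟨by simpa using d3, by rw [hk1, pow_one]; exact d4⟩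
  · -- n ≡ 0 mod 16 : four elements, all involutions
    intro h16
    have hk4 : 4 ≤ k := hdet.2.2.2.2 (by omega)
    have hk2' : 2 ≤ k := by omega
    obtain ⟨t, htodd, c, hc⟩ := exists_t hk4 hmZ
    have ht : ∃ t1 : ℤ, t + 1 = 2*t1 := ⟨(t+1)/2, by omega⟩
    have ht' : ∃ t1 : ℤ, -t + 1 = 2*t1 := ⟨(-t+1)/2, by omega⟩
    have htt : ∃ d : ℤ, 2^(k-1)*(m:ℤ) + t^2 - 1 = 2^k * d := htt_of (by omega) hmZ hc
    have htt' : ∃ d : ℤ, 2^(k-1)*(m:ℤ) + (-t)^2 - 1 = 2^k * d := by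
      obtain ⟨d, hd⟩ := htt
      exact ⟨d, by linear_combination hd⟩
    have hc' : (m:ℤ)*((-t)^2-1) = 2^(k-1) + 2^(k+1)*c := by linear_combination hc
    obtain ⟨r, hr⟩ := (Int.odd_iff.mpr hmZ).mul (Int.odd_iff.mpr htodd)
    have hmt : (m:ℤ)*t = 1 - 2*(-r) := by linear_combination hr
    have hmt' : (m:ℤ)*(-t) = 1 - 2*(r+1) := by linear_combination -hr
    have hQneg : QPres2 n (gNeg hN hk hm) :=
      (QPres2_iff n hN hk hm hn _ (gNeg_e hN hk hm) (gNeg_f hN hk hm)).mpr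
        (fun a s => ⟨0, by ring⟩)
    have hQTp : QPres2 n (gT hN hk hm t hk2' ht htt) :=
      (QPres2_iff n hN hk hm hn _ (gT_e hN hk hm t hk2' ht htt) (gT_f hN hk hm t hk2' ht htt)).mpr
        (ver_T (by omega) hmt hc)
    have hQTm : QPres2 n (gT hN hk hm (-t) hk2' ht' htt') :=
      (QPres2_iff n hN hk hm hn _ (gT_e hN hk hm (-t) hk2' ht' htt')
        (gT_f hN hk hm (-t) hk2' ht' htt')).mpr (ver_T (by omega) hmt' hc')
    have classify : ∀ g, QPres2 n g → g = AddEquiv.refl _ ∨ g = gNeg hN hk hm ∨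
        g = gT hN hk hm t hk2' ht htt ∨ g = gT hN hk hm (-t) hk2' ht' htt' := by
      intro g hg
      obtain ⟨u, v, w, z, hu, hw, hv, h10, h01, h11⟩ := extract g hg
      obtain ⟨du, hz, hcase⟩ := classify_k2 hk2' hmZ hv h10 h01 h11
      rcases hcase with ⟨dw, dv, dz⟩ | ⟨dw, _, dv, hzc⟩
      · rcases dz with dz | dz
        · left
          apply g_ext hN hk hm g (AddEquiv.refl _)
          · rw [hu]
            exact (mkG_eq_iff hN hk hm u v 1 0).mpr ⟨du, by simpa using dv⟩
          · rw [hw]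
            exact (mkG_eq_iff hN hk hm w z 0 1).mpr ⟨by simpa using dw, dz⟩
        · right; left
          apply g_ext hN hk hm g (gNeg hN hk hm)
          · rw [hu, gNeg_e]
            exact (mkG_eq_iff hN hk hm u v 1 0).mpr ⟨du, by simpa using dv⟩
          · rw [hw, gNeg_f]
            exact (mkG_eq_iff hN hk hm w z 0 (-1)).mpr ⟨by simpa using dw, dz⟩
      · rcases z_pm hk2' hmZ htodd hzc ⟨c, hc⟩ with dz | dz
        · right; right; left
          apply g_ext hN hk hm g (gT hN hk hm t hk2' ht htt)
          · rw [hu, gT_e]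
            exact (mkG_eq_iff hN hk hm u v 1 (2^(k-1))).mpr ⟨du, dv⟩
          · rw [hw, gT_f]
            exact (mkG_eq_iff hN hk hm w z 1 t).mpr ⟨dw, dz⟩
        · right; right; right
          apply g_ext hN hk hm g (gT hN hk hm (-t) hk2' ht' htt')
          · rw [hu, gT_e]
            exact (mkG_eq_iff hN hk hm u v 1 (2^(k-1))).mpr ⟨du, dv⟩
          · rw [hw, gT_f]
            exact (mkG_eq_iff hN hk hm w z 1 (-t)).mpr ⟨dw, dz⟩
    have hnd1 : ¬ ((2:ℤ)^k ∣ 2) := not_pow_dvd_two hk2'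
    have hnd2 : ¬ ((2:ℤ)^k ∣ 2^(k-1)) := not_pow_dvd_half hk
    constructor
    · apply card_eq_four_of (AddEquiv.refl _) (gNeg hN hk hm)
        (gT hN hk hm t hk2' ht htt) (gT hN hk hm (-t) hk2' ht' htt')
        hQrefl hQneg hQTp hQTm
      · intro h
        have h2 := himg _ _ (mkG hN hk 0 1) h
        rw [gNeg_f] at h2
        obtain ⟨-, hd⟩ := (mkG_eq_iff hN hk hm 0 1 0 (-1)).mp h2
        exact hnd1 (by simpa using hd)
      · intro h
        have h2 := himg _ _ (mkG hN hk 1 0) h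
        rw [gT_e] at h2
        obtain ⟨-, hd⟩ := (mkG_eq_iff hN hk hm 1 0 1 (2^(k-1))).mp h2
        exact hnd2 (by rw [show (0:ℤ) - 2^(k-1) = -(2^(k-1)) by ring] at hd; exact (dvd_neg).mp hd)
      · intro h
        have h2 := himg _ _ (mkG hN hk 1 0) h
        rw [gT_e] at h2
        obtain ⟨-, hd⟩ := (mkG_eq_iff hN hk hm 1 0 1 (2^(k-1))).mp h2
        exact hnd2 (by rw [show (0:ℤ) - 2^(k-1) = -(2^(k-1)) by ring] at hd; exact (dvd_neg).mp hd)
      · intro h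
        have h2 := himg _ _ (mkG hN hk 1 0) h
        rw [gNeg_e, gT_e] at h2
        obtain ⟨-, hd⟩ := (mkG_eq_iff hN hk hm 1 0 1 (2^(k-1))).mp h2
        exact hnd2 (by rw [show (0:ℤ) - 2^(k-1) = -(2^(k-1)) by ring] at hd; exact (dvd_neg).mp hd)
      · intro h
        have h2 := himg _ _ (mkG hN hk 1 0) h
        rw [gNeg_e, gT_e] at h2
        obtain ⟨-, hd⟩ := (mkG_eq_iff hN hk hm 1 0 1 (2^(k-1))).mp h2
        exact hnd2 (by rw [show (0:ℤ) - 2^(k-1) = -(2^(k-1)) by ring] at hd; exact (dvd_neg).mp hd)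
      · intro h
        have h2 := himg _ _ (mkG hN hk 0 1) h
        rw [gT_f, gT_f] at h2
        obtain ⟨-, hd⟩ := (mkG_eq_iff hN hk hm 1 t 1 (-t)).mp h2
        exact not_pow_dvd_two_odd hk2' htodd (by simpa [two_mul] using hd)
      · exact classify
    · intro g hg x
      rcases classify g hg with rfl | rfl | rfl | rfl
      · rfl
      · exact gNeg_invol hN hk hm x
      · exact gT_invol hN hk hm t hk2' ht htt x
      · exact gT_invol hN hk hm (-t) hk2' ht' htt' x
  · -- the remaining cases : order two
    intro hcase
    rcases hcase with h84 | h86 | h168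
    · -- k = 2
      have hk2 : k = 2 := hdet.2.2.1 (by omega)
      have hk2' : 2 ≤ k := by omega
      have hQneg : QPres2 n (gNeg hN hk hm) :=
        (QPres2_iff n hN hk hm hn _ (gNeg_e hN hk hm) (gNeg_f hN hk hm)).mpr
          (fun a s => ⟨0, by ring⟩)
      apply card_eq_two_of (AddEquiv.refl _) (gNeg hN hk hm) hQrefl hQneg
      · intro h
        have h2 := himg _ _ (mkG hN hk 0 1) h
        rw [gNeg_f] at h2
        obtain ⟨-, hd⟩ := (mkG_eq_iff hN hk hm 0 1 0 (-1)).mp h2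
        exact not_pow_dvd_two hk2' (by simpa using hd)
      · intro g hg
        obtain ⟨u, v, w, z, hu, hw, hv, h10, h01, h11⟩ := extract g hg
        obtain ⟨du, hz, hcase2⟩ := classify_k2 hk2' hmZ hv h10 h01 h11
        rcases hcase2 with ⟨dw, dv, dz⟩ | ⟨-, h4P, -, -⟩
        · rcases dz with dz | dz
          · left
            apply g_ext hN hk hm g (AddEquiv.refl _)
            · rw [hu]
              exact (mkG_eq_iff hN hk hm u v 1 0).mpr ⟨du, by simpa using dv⟩
            · rw [hw]
              exact (mkG_eq_iff hN hk hm w z 0 1).mpr ⟨by simpa using dw, dz⟩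
          · right
            apply g_ext hN hk hm g (gNeg hN hk hm)
            · rw [hu, gNeg_e]
              exact (mkG_eq_iff hN hk hm u v 1 0).mpr ⟨du, by simpa using dv⟩
            · rw [hw, gNeg_f]
              exact (mkG_eq_iff hN hk hm w z 0 (-1)).mpr ⟨by simpa using dw, dz⟩
        · exfalso
          rw [hk2] at h4P
          norm_num at h4P
    · -- k = 1, m ≡ 3 mod 4
      obtain ⟨hk1, hm43⟩ := hdet.2.1 (by omega)
      have hQswap : QPres2 n (gSwap hN hk hm hk1) :=
        (QPres2_iff n hN hk hm hn _ (gSwap_e hN hk hm hk1) (gSwap_f hN hk hm hk1)).mpr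
          (by rw [hk1]; exact ver_swap (by omega : (m:ℤ) % 4 = 3))
      apply card_eq_two_of (AddEquiv.refl _) (gSwap hN hk hm hk1) hQrefl hQswap
      · intro h
        have h2 := himg _ _ (mkG hN hk 1 0) h
        rw [gSwap_e] at h2
        obtain ⟨hd, -⟩ := (mkG_eq_iff hN hk hm 1 0 0 1).mp h2
        omega
      · intro g hg
        obtain ⟨u, v, w, z, hu, hw, hv, h10, h01, h11⟩ := extract g hg
        rw [hk1] at h10 h01 h11
        have h10' : (4:ℤ) ∣ u^2 - 1 - (m:ℤ)*v^2 := by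
          obtain ⟨q, hq⟩ := h10
          exact ⟨q, mul_left_cancel₀ (by norm_num : (2:ℤ) ≠ 0) (by linear_combination hq)⟩
        have h01' : (4:ℤ) ∣ w^2 - (m:ℤ)*(z^2-1) := by
          obtain ⟨q, hq⟩ := h01
          exact ⟨q, mul_left_cancel₀ (by norm_num : (2:ℤ) ≠ 0) (by linear_combination hq)⟩
        have h11' : (4:ℤ) ∣ (u+w)^2 - 1 - (m:ℤ)*((v+z)^2-1) := by
          obtain ⟨q, hq⟩ := h11
          exact ⟨q, mul_left_cancel₀ (by norm_num : (2:ℤ) ≠ 0) (by linear_combination hq)⟩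
        rcases class_k1_m3 (by omega : (m:ℤ) % 4 = 3) h10' h01' h11' with
          ⟨d1, d2, d3, d4⟩ | ⟨d1, d2, d3, d4⟩
        · left
          apply g_ext hN hk hm g (AddEquiv.refl _)
          · rw [hu]
            exact (mkG_eq_iff hN hk hm u v 1 0).mpr ⟨d1, by rw [hk1, pow_one]; exact d2⟩
          · rw [hw]
            exact (mkG_eq_iff hN hk hm w z 0 1).mpr ⟨d3, by rw [hk1, pow_one]; exact d4⟩
        · right
          apply g_ext hN hk hm g (gSwap hN hk hm hk1)
          · rw [hu, gSwap_e]
            exact (mkG_eq_iff hN hk hm u v 0 1).mpr ⟨d1, by rw [hk1, pow_one]; exact d2⟩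
          · rw [hw, gSwap_f]
            exact (mkG_eq_iff hN hk hm w z 1 0).mpr ⟨d3, by rw [hk1, pow_one]; exact d4⟩
    · -- k = 3
      have hk3 : k = 3 := hdet.2.2.2.1 (by omega)
      have hk2' : 2 ≤ k := by omega
      have hQneg : QPres2 n (gNeg hN hk hm) :=
        (QPres2_iff n hN hk hm hn _ (gNeg_e hN hk hm) (gNeg_f hN hk hm)).mpr
          (fun a s => ⟨0, by ring⟩)
      apply card_eq_two_of (AddEquiv.refl _) (gNeg hN hk hm) hQrefl hQneg
      · intro h
        have h2 := himg _ _ (mkG hN hk 0 1) h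
        rw [gNeg_f] at h2
        obtain ⟨-, hd⟩ := (mkG_eq_iff hN hk hm 0 1 0 (-1)).mp h2
        exact not_pow_dvd_two hk2' (by simpa using hd)
      · intro g hg
        obtain ⟨u, v, w, z, hu, hw, hv, h10, h01, h11⟩ := extract g hg
        obtain ⟨du, hz, hcase2⟩ := classify_k2 hk2' hmZ hv h10 h01 h11
        rcases hcase2 with ⟨dw, dv, dz⟩ | ⟨-, h4P, -, -⟩
        · rcases dz with dz | dz
          · left
            apply g_ext hN hk hm g (AddEquiv.refl _)
            · rw [hu]
              exact (mkG_eq_iff hN hk hm u v 1 0).mpr ⟨du, by simpa using dv⟩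
            · rw [hw]
              exact (mkG_eq_iff hN hk hm w z 0 1).mpr ⟨by simpa using dw, dz⟩
          · right
            apply g_ext hN hk hm g (gNeg hN hk hm)
            · rw [hu, gNeg_e]
              exact (mkG_eq_iff hN hk hm u v 1 0).mpr ⟨du, by simpa using dv⟩
            · rw [hw, gNeg_f]
              exact (mkG_eq_iff hN hk hm w z 0 (-1)).mpr ⟨by simpa using dw, dz⟩
        · exfalso
          rw [hk3] at h4P
          norm_num at h4P


/-- For the discriminant quadratic form `q` of `⟨2⟩⊕⟨-n⟩` on
`ℤ/2 × ℤ/n`, the group `O(q₂)` of automorphisms of the 2-primary component preserving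
`q₂` has order `1` if `n ≡ 2 mod 8`, order `4` (with every element an involution,
hence `≅ (ℤ/2)²`) if `n ≡ 0 mod 16`, and order `2` otherwise. -/
theorem order_Oq2_of_two_oplus_neg_n (n : ℤ) (hn : 0 < n) (heven : 2 ∣ n) :
    (n % 8 = 2 →
      Nat.card {g : primaryPart 2 (ZMod 2 × ZMod n.toNat) ≃+
          primaryPart 2 (ZMod 2 × ZMod n.toNat) // QPres2 n g} = 1) ∧
    (n % 16 = 0 →
      Nat.card {g : primaryPart 2 (ZMod 2 × ZMod n.toNat) ≃+
          primaryPart 2 (ZMod 2 × ZMod n.toNat) // QPres2 n g} = 4 ∧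
      ∀ g : primaryPart 2 (ZMod 2 × ZMod n.toNat) ≃+
          primaryPart 2 (ZMod 2 × ZMod n.toNat),
        QPres2 n g → ∀ x, g (g x) = x) ∧
    ((n % 8 = 4 ∨ n % 8 = 6 ∨ n % 16 = 8) →
      Nat.card {g : primaryPart 2 (ZMod 2 × ZMod n.toNat) ≃+
          primaryPart 2 (ZMod 2 × ZMod n.toNat) // QPres2 n g} = 2) :=
  order_Oq2_of_two_oplus_neg_n_aux n hn heven
end

section
/- Let L be an even unimodular lattice, S ⊆ L a nondegenerate primitive sublattice (i.e. L/S is torsion-free), and T = S^⊥ = {x ∈ L : ⟨x,S⟩ = 0}. Write each x ∈ L as x = x_S + x_T with x_S ∈ S⊗ℚ and x_T ∈ T⊗ℚ; then x_S ∈ S∨ and x_T ∈ T∨, and the image of L under x ↦ (x_S mod S, x_T mod T) in A_S ⊕ A_T is the graph of a group isomorphism γ : A_S → A_T satisfying q_T(γ(ξ)) = −q_S(ξ) for all ξ ∈ A_S. In particular the discriminant quadratic form q_T is isomorphic to −q_S. -/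
open Matrix

/-! ### Auxiliary lemmas for the gluing theorem -/

section GlueAux

open IntLattice

variable {N r r2 : ℕ}

lemma castVec_injective : Function.Injective (castVec (N := N)) := by
  intro x y h
  funext i
  have : (x i : ℚ) = (y i : ℚ) := congrFun h i
  exact_mod_cast this

lemma castVec_vecMul (c : Fin r → ℤ) (B : Matrix (Fin r) (Fin N) ℤ) :
    castVec (c ᵥ* B) = (castVec c) ᵥ* (B.map ((↑) : ℤ → ℚ)) := by
  funext i
  simp [castVec, vecMul, dotProduct, Matrix.map_apply]

lemma castVec_mulVec (M : Matrix (Fin r) (Fin N) ℤ) (v : Fin N → ℤ) :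
    castVec (M *ᵥ v) = (M.map ((↑) : ℤ → ℚ)) *ᵥ castVec v := by
  funext i
  simp [castVec, mulVec, dotProduct, Matrix.map_apply]

lemma castVec_add (x y : Fin N → ℤ) : castVec (x + y) = castVec x + castVec y := by
  funext i; simp [castVec]

lemma castVec_sub (x y : Fin N → ℤ) : castVec (x - y) = castVec x - castVec y := by
  funext i; simp [castVec]

lemma castVec_smul (m : ℤ) (x : Fin N → ℤ) : castVec (m • x) = (m : ℚ) • castVec x := by
  funext i; simp [castVec]

lemma exists_int_smul (q : Fin N → ℚ) :
    ∃ (m : ℤ) (z : Fin N → ℤ), m ≠ 0 ∧ (m : ℚ) • q = castVec z := by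
  obtain ⟨b, hb⟩ := IsLocalization.exist_integer_multiples (nonZeroDivisors ℤ)
    (Finset.univ : Finset (Fin N)) q
  refine ⟨(b : ℤ), fun i => ((hb i (Finset.mem_univ i)).choose), nonZeroDivisors.coe_ne_zero b, ?_⟩
  funext i
  have := (hb i (Finset.mem_univ i)).choose_spec
  simpa [castVec, Algebra.smul_def] using this.symm

lemma single_vecMul {α : Type*} [NonAssocSemiring α] (B : Matrix (Fin r) (Fin N) α) (i : Fin r) :
    (Pi.single i (1 : α)) ᵥ* B = B i := by
  funext j
  simp [vecMul, dotProduct, Pi.single_apply]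

lemma smul_vecMul' {α : Type*} [CommRing α] (a : α) (v : Fin r → α)
    (B : Matrix (Fin r) (Fin N) α) : (a • v) ᵥ* B = a • (v ᵥ* B) := by
  funext j
  simp [vecMul, dotProduct, Finset.mul_sum, mul_assoc]

lemma sub_vecMul' {α : Type*} [CommRing α] (v w : Fin r → α)
    (B : Matrix (Fin r) (Fin N) α) : (v - w) ᵥ* B = v ᵥ* B - w ᵥ* B := by
  funext j
  simp [vecMul, dotProduct, sub_mul, Finset.sum_sub_distrib]

lemma add_vecMul' {α : Type*} [CommRing α] (v w : Fin r → α)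
    (B : Matrix (Fin r) (Fin N) α) : (v + w) ᵥ* B = v ᵥ* B + w ᵥ* B := by
  funext j
  simp [vecMul, dotProduct, add_mul, Finset.sum_add_distrib]

lemma dot_mulVec_symm {α : Type*} [CommRing α] {M : Matrix (Fin r) (Fin r) α}
    (hM : M.IsSymm) (a c : Fin r → α) : a ⬝ᵥ (M *ᵥ c) = (M *ᵥ a) ⬝ᵥ c := by
  rw [dotProduct_mulVec]
  congr 1
  conv_lhs => rw [← hM.eq]
  exact vecMul_transpose M a

namespace IntLattice

lemma qbilin_comm' (L : IntLattice) (x y : Fin L.rank → ℚ) :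
    L.qbilin x y = L.qbilin y x := by
  have hs : ∀ i j, L.gram j i = L.gram i j := fun i j => congrFun (congrFun L.symm i) j
  simp only [qbilin, dotProduct, mulVec, Finset.mul_sum]
  rw [Finset.sum_comm]
  exact Finset.sum_congr rfl fun j _ => Finset.sum_congr rfl fun i _ => by
    simp only [Matrix.map_apply]; rw [hs i j]; ring

lemma qbilin_castVec (L : IntLattice) (x y : Fin L.rank → ℤ) :
    L.qbilin (castVec x) (castVec y) = (L.bilin x y : ℚ) := by
  simp [qbilin, bilin, castVec, dotProduct, mulVec, Matrix.map_apply]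

lemma qbilin_add_right (L : IntLattice) (x y z : Fin L.rank → ℚ) :
    L.qbilin x (y + z) = L.qbilin x y + L.qbilin x z := by
  simp [qbilin, mulVec_add, dotProduct_add]

lemma qbilin_add_left (L : IntLattice) (x y z : Fin L.rank → ℚ) :
    L.qbilin (x + y) z = L.qbilin x z + L.qbilin y z := by
  simp [qbilin, add_dotProduct]

lemma qbilin_sub_left (L : IntLattice) (x y z : Fin L.rank → ℚ) :
    L.qbilin (x - y) z = L.qbilin x z - L.qbilin y z := by
  simp [qbilin, sub_dotProduct]

lemma qbilin_sub_right (L : IntLattice) (x y z : Fin L.rank → ℚ) :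
    L.qbilin x (y - z) = L.qbilin x y - L.qbilin x z := by
  simp [qbilin, mulVec_sub, dotProduct_sub]

lemma qbilin_smul_left (L : IntLattice) (a : ℚ) (x y : Fin L.rank → ℚ) :
    L.qbilin (a • x) y = a * L.qbilin x y := by
  simp [qbilin, smul_dotProduct]

lemma bilin_matrix (L : IntLattice) {r r2 : ℕ} (B : Matrix (Fin r) (Fin L.rank) ℤ)
    (C : Matrix (Fin r2) (Fin L.rank) ℤ) (i : Fin r) (j : Fin r2) :
    (B * L.gram * Cᵀ) i j = L.bilin (B i) (C j) := by
  simp only [Matrix.mul_apply, bilin, dotProduct, mulVec, transpose_apply,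
    Finset.sum_mul, Finset.mul_sum]
  rw [Finset.sum_comm]
  exact Finset.sum_congr rfl fun a _ => Finset.sum_congr rfl fun b _ => by ring

lemma gramOf_eq (L : IntLattice) {r : ℕ} (B : Matrix (Fin r) (Fin L.rank) ℤ) :
    L.gramOf B = B * L.gram * Bᵀ := by
  ext i j
  rw [bilin_matrix]
  rfl

lemma qbilin_vecMul_left (L : IntLattice) {r : ℕ} (B : Matrix (Fin r) (Fin L.rank) ℤ)
    (a : Fin r → ℚ) (y : Fin L.rank → ℚ) :
    L.qbilin (a ᵥ* B.map ((↑) : ℤ → ℚ)) y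
      = a ⬝ᵥ ((B.map ((↑) : ℤ → ℚ) * L.gram.map ((↑) : ℤ → ℚ)) *ᵥ y) := by
  rw [qbilin, ← dotProduct_mulVec, mulVec_mulVec]

lemma qbilin_vecMul_both (L : IntLattice) {r r2 : ℕ} (B : Matrix (Fin r) (Fin L.rank) ℤ)
    (C : Matrix (Fin r2) (Fin L.rank) ℤ) (a : Fin r → ℚ) (c : Fin r2 → ℚ) :
    L.qbilin (a ᵥ* B.map ((↑) : ℤ → ℚ)) (c ᵥ* C.map ((↑) : ℤ → ℚ))
      = a ⬝ᵥ (((B * L.gram * Cᵀ).map ((↑) : ℤ → ℚ)) *ᵥ c) := by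
  rw [qbilin_vecMul_left]
  have h0 : (c ᵥ* C.map ((↑) : ℤ → ℚ)) = (C.map ((↑) : ℤ → ℚ))ᵀ *ᵥ c := by
    rw [mulVec_transpose]
  rw [h0, mulVec_mulVec]
  congr 2
  have h1 : (B * L.gram * Cᵀ).map ((↑) : ℤ → ℚ)
      = (B.map ((↑) : ℤ → ℚ)) * (L.gram.map ((↑) : ℤ → ℚ)) * ((Cᵀ).map ((↑) : ℤ → ℚ)) := by
    simp only [← Int.coe_castRingHom, Matrix.map_mul]
  rw [h1, Matrix.transpose_map]

lemma bilin_vecMul_left (L : IntLattice) {r : ℕ} (C : Matrix (Fin r) (Fin L.rank) ℤ)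
    (c : Fin r → ℤ) (y : Fin L.rank → ℤ) :
    L.bilin (c ᵥ* C) y = c ⬝ᵥ (fun i => L.bilin (C i) y) := by
  rw [bilin, ← dotProduct_mulVec]
  congr 1

lemma bilin_vecMul_both (L : IntLattice) {r r2 : ℕ} (B : Matrix (Fin r) (Fin L.rank) ℤ)
    (C : Matrix (Fin r2) (Fin L.rank) ℤ) (a : Fin r → ℤ) (c : Fin r2 → ℤ) :
    L.bilin (a ᵥ* B) (c ᵥ* C) = a ⬝ᵥ ((B * L.gram * Cᵀ) *ᵥ c) := by
  rw [bilin, ← dotProduct_mulVec, mulVec_mulVec]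
  have h0 : (c ᵥ* C) = Cᵀ *ᵥ c := by rw [mulVec_transpose]
  rw [h0, mulVec_mulVec]

lemma sub_qbilin (L : IntLattice) {r : ℕ} (B : Matrix (Fin r) (Fin L.rank) ℤ)
    (a c : Fin r → ℚ) :
    (L.sub B).qbilin a c
      = L.qbilin (a ᵥ* B.map ((↑) : ℤ → ℚ)) (c ᵥ* B.map ((↑) : ℤ → ℚ)) := by
  rw [qbilin_vecMul_both, ← gramOf_eq]
  rfl

end IntLattice

end GlueAux


section GlueB

open IntLattice

variable {N r : ℕ}

lemma glue_indQ {B : Matrix (Fin r) (Fin N) ℤ}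
    (hind : ∀ c : Fin r → ℤ, c ᵥ* B = 0 → c = 0)
    (w : Fin r → ℚ) (hw : w ᵥ* B.map ((↑) : ℤ → ℚ) = 0) : w = 0 := by
  obtain ⟨m, d, hm, hmd⟩ := exists_int_smul w
  have h1 : castVec (d ᵥ* B) = 0 := by
    rw [castVec_vecMul, ← hmd, smul_vecMul', hw, smul_zero]
  have h2 : d ᵥ* B = 0 := castVec_injective (by rw [h1]; funext i; simp [castVec])
  have h3 : d = 0 := hind d h2
  have h4 : (m : ℚ) • w = 0 := by rw [hmd, h3]; funext i; simp [castVec]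
  have hm' : (m : ℚ) ≠ 0 := Int.cast_ne_zero.mpr hm
  exact (smul_eq_zero.mp h4).resolve_left hm'

lemma basis_ind {Sm : Submodule ℤ (Fin N → ℤ)} {B : Matrix (Fin r) (Fin N) ℤ}
    (hB : IsBasisOf Sm B) : ∀ c : Fin r → ℤ, c ᵥ* B = 0 → c = 0 := by
  intro c hc
  obtain ⟨c₀, _, huniq⟩ := hB.2 0 (Submodule.zero_mem Sm)
  have h1 : c = c₀ := huniq c hc.symm
  have h2 : (0 : Fin r → ℤ) = c₀ := huniq 0 (Matrix.zero_vecMul B).symm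
  rw [h1, ← h2]

lemma vecMul_mem {Sm : Submodule ℤ (Fin N → ℤ)} {B : Matrix (Fin r) (Fin N) ℤ}
    (hB : ∀ i, B i ∈ Sm) (c : Fin r → ℤ) : c ᵥ* B ∈ Sm := by
  have h : c ᵥ* B = ∑ i, c i • B i := by
    funext j
    simp [vecMul, dotProduct, Finset.sum_apply]
  rw [h]
  exact Submodule.sum_mem Sm fun i _ => Submodule.smul_mem Sm (c i) (hB i)

lemma glue_coords_int {Sm : Submodule ℤ (Fin N → ℤ)} {B : Matrix (Fin r) (Fin N) ℤ}
    (hB : IsBasisOf Sm B)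
    (hprim : ∀ (m : ℤ) (x : Fin N → ℤ), m ≠ 0 → m • x ∈ Sm → x ∈ Sm)
    (z : Fin N → ℤ) (w : Fin r → ℚ)
    (hzw : castVec z = w ᵥ* B.map ((↑) : ℤ → ℚ)) :
    ∃ c : Fin r → ℤ, w = castVec c ∧ z = c ᵥ* B := by
  obtain ⟨m, d, hm, hmd⟩ := exists_int_smul w
  have h1 : castVec (m • z) = castVec (d ᵥ* B) := by
    rw [castVec_smul, castVec_vecMul, hzw, ← smul_vecMul', hmd]
  have h2 : m • z = d ᵥ* B := castVec_injective h1
  have h3 : m • z ∈ Sm := h2 ▸ vecMul_mem hB.1 d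
  have h4 : z ∈ Sm := hprim m z hm h3
  obtain ⟨c, hc, -⟩ := hB.2 z h4
  refine ⟨c, ?_, hc⟩
  have h5 : (w - castVec c) ᵥ* B.map ((↑) : ℤ → ℚ) = 0 := by
    rw [sub_vecMul', ← hzw, ← castVec_vecMul, ← hc, sub_self]
  have := glue_indQ (basis_ind hB) _ h5
  have h6 : w - castVec c = 0 := this
  linear_combination (norm := skip) h6
  funext i
  have := congrFun h6 i
  simpa using this

lemma glue_splitting (Sm : Submodule ℤ (Fin N → ℤ))
    (hprim : ∀ (m : ℤ) (x : Fin N → ℤ), m ≠ 0 → m • x ∈ Sm → x ∈ Sm) :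
    ∃ π : (Fin N → ℤ) →ₗ[ℤ] (Fin N → ℤ), (∀ z, π z ∈ Sm) ∧ (∀ s ∈ Sm, π s = s) := by
  haveI : NoZeroSMulDivisors ℤ ((Fin N → ℤ) ⧸ Sm) := by
    constructor
    intro c x h
    by_cases hc : c = 0
    · exact Or.inl hc
    · right
      obtain ⟨y, rfl⟩ := Submodule.Quotient.mk_surjective Sm x
      have h1 : Submodule.Quotient.mk (c • y) = (0 : (Fin N → ℤ) ⧸ Sm) := by
        rw [Submodule.Quotient.mk_smul]; exact h
      have h2 : c • y ∈ Sm := (Submodule.Quotient.mk_eq_zero Sm).mp h1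
      exact (Submodule.Quotient.mk_eq_zero Sm).mpr (hprim c y hc h2)
  haveI : Module.Free ℤ ((Fin N → ℤ) ⧸ Sm) := Module.free_of_finite_type_torsion_free'
  obtain ⟨h, hh⟩ := LinearMap.exists_rightInverse_of_surjective Sm.mkQ Sm.range_mkQ
  refine ⟨(LinearMap.id : (Fin N → ℤ) →ₗ[ℤ] (Fin N → ℤ)) - h ∘ₗ Sm.mkQ, ?_, ?_⟩
  · intro z
    have h1 : Sm.mkQ (((LinearMap.id : (Fin N → ℤ) →ₗ[ℤ] (Fin N → ℤ)) - h ∘ₗ Sm.mkQ) z) = 0 := by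
      have := congrFun (congrArg DFunLike.coe hh) (Sm.mkQ z)
      simp only [LinearMap.coe_comp, Function.comp_apply, LinearMap.id_coe, id_eq] at this
      rw [LinearMap.sub_apply, map_sub, LinearMap.comp_apply, this, LinearMap.id_apply, sub_self]
    rw [← Submodule.Quotient.mk_eq_zero Sm, ← Submodule.mkQ_apply]
    exact h1
  · intro s hs
    have h1 : Sm.mkQ s = 0 := by simpa [Submodule.Quotient.mk_eq_zero] using hs
    simp [LinearMap.sub_apply, h1]

end GlueB


section GlueC

open IntLattice

lemma mem_dualSub {M : IntLattice} (u : Fin M.rank → ℚ) :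
    u ∈ M.dualSub ↔ ∀ y : Fin M.rank → ℤ, ∃ m : ℤ, M.qbilin u (castVec y) = m :=
  Iff.rfl

lemma castVec_row {N r : ℕ} (B : Matrix (Fin r) (Fin N) ℤ) (i : Fin r) :
    castVec (B i) = (Pi.single i (1 : ℚ)) ᵥ* B.map ((↑) : ℤ → ℚ) := by
  funext j
  simp [castVec, vecMul, dotProduct, Pi.single_apply, Matrix.map_apply]

lemma gramOf_map_eq (L : IntLattice) {r : ℕ} (B : Matrix (Fin r) (Fin L.rank) ℤ) :
    (L.gramOf B).map ((↑) : ℤ → ℚ)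
      = B.map ((↑) : ℤ → ℚ) * L.gram.map ((↑) : ℤ → ℚ) * (B.map ((↑) : ℤ → ℚ))ᵀ := by
  rw [IntLattice.gramOf_eq]
  simp only [← Int.coe_castRingHom, Matrix.map_mul, Matrix.transpose_map]

lemma glue_row_pair (L : IntLattice) {r : ℕ} (B : Matrix (Fin r) (Fin L.rank) ℤ)
    (c : Fin r → ℚ) (i : Fin r) :
    L.qbilin (c ᵥ* B.map ((↑) : ℤ → ℚ)) (castVec (B i))
      = (((L.gramOf B).map ((↑) : ℤ → ℚ)) *ᵥ c) i := by
  rw [castVec_row, L.qbilin_vecMul_both, ← IntLattice.gramOf_eq]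
  rw [dot_mulVec_symm ((L.gramOf_isSymm B).map _)]
  simp [dotProduct, Pi.single_apply]

lemma glue_decomp (L : IntLattice) {rs rt : ℕ}
    (BS : Matrix (Fin rs) (Fin L.rank) ℤ) (BT : Matrix (Fin rt) (Fin L.rank) ℤ)
    (horth : BS * L.gram * BTᵀ = 0)
    (hdetS : IsUnit (((L.gramOf BS).map ((↑) : ℤ → ℚ))).det)
    (hperp : ∀ z : Fin L.rank → ℤ, (∀ i, L.bilin z (BS i) = 0) → ∃ c, z = c ᵥ* BT)
    (x : Fin L.rank → ℤ) :
    ∃ (u : Fin (L.sub BS).rank → ℚ) (v : Fin (L.sub BT).rank → ℚ),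
      castVec x = u ᵥ* BS.map ((↑) : ℤ → ℚ) + v ᵥ* BT.map ((↑) : ℤ → ℚ) ∧
      u ∈ (L.sub BS).dualSub ∧ v ∈ (L.sub BT).dualSub ∧
      ∀ u' : Fin rs → ℚ,
        ((L.gramOf BS).map ((↑) : ℤ → ℚ)) *ᵥ u'
          = (BS.map ((↑) : ℤ → ℚ) * L.gram.map ((↑) : ℤ → ℚ)) *ᵥ castVec x → u' = u := by
  set BSq := BS.map ((↑) : ℤ → ℚ) with hBSq
  set BTq := BT.map ((↑) : ℤ → ℚ) with hBTq
  set Gq := L.gram.map ((↑) : ℤ → ℚ) with hGq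
  set GSq := (L.gramOf BS).map ((↑) : ℤ → ℚ) with hGSq
  have hGSq_symm : GSq.IsSymm := (L.gramOf_isSymm BS).map _
  set u := GSq⁻¹ *ᵥ ((BSq * Gq) *ᵥ castVec x) with hu_def
  have hGu : GSq *ᵥ u = (BSq * Gq) *ᵥ castVec x := by
    rw [hu_def, mulVec_mulVec, Matrix.mul_nonsing_inv _ hdetS, one_mulVec]
  have hmulinj : ∀ u' : Fin rs → ℚ, GSq *ᵥ u' = (BSq * Gq) *ᵥ castVec x → u' = u := by
    intro u' h
    have h2 : GSq⁻¹ *ᵥ (GSq *ᵥ u') = GSq⁻¹ *ᵥ ((BSq * Gq) *ᵥ castVec x) := by rw [h]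
    rwa [mulVec_mulVec, Matrix.nonsing_inv_mul _ hdetS, one_mulVec] at h2
  set w := castVec x - u ᵥ* BSq with hw_def
  have hw : ∀ c : Fin rs → ℚ, L.qbilin w (c ᵥ* BSq) = 0 := by
    intro c
    rw [hw_def, L.qbilin_sub_left]
    have h1 : L.qbilin (castVec x) (c ᵥ* BSq) = c ⬝ᵥ ((BSq * Gq) *ᵥ castVec x) := by
      rw [L.qbilin_comm', hBSq, L.qbilin_vecMul_left]
    have h2 : L.qbilin (u ᵥ* BSq) (c ᵥ* BSq) = c ⬝ᵥ ((BSq * Gq) *ᵥ castVec x) := by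
      rw [hBSq, L.qbilin_vecMul_both, ← hBSq]
      rw [show (BS * L.gram * BSᵀ).map ((↑) : ℤ → ℚ) = GSq by rw [hGSq, IntLattice.gramOf_eq]]
      rw [dot_mulVec_symm hGSq_symm, hGu, dotProduct_comm]
    rw [h1, h2, sub_self]
  obtain ⟨m, z, hm, hmz⟩ := exists_int_smul w
  have hmQ : (m : ℚ) ≠ 0 := Int.cast_ne_zero.mpr hm
  have hz_perp : ∀ i, L.bilin z (BS i) = 0 := by
    intro i
    have h1 : L.qbilin (castVec z) (castVec (BS i)) = 0 := by
      rw [← hmz, castVec_row, L.qbilin_smul_left, ← hBSq, hw, mul_zero]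
    have h2 : (L.bilin z (BS i) : ℚ) = 0 := by rw [← L.qbilin_castVec]; exact h1
    exact_mod_cast h2
  obtain ⟨cT, hcT⟩ := hperp z hz_perp
  set v := (m : ℚ)⁻¹ • castVec cT with hv_def
  have hvw : v ᵥ* BTq = w := by
    rw [hv_def, smul_vecMul', ← castVec_vecMul, ← hcT, ← hmz, smul_smul,
      inv_mul_cancel₀ hmQ, one_smul]
  have hdecomp : castVec x = u ᵥ* BSq + v ᵥ* BTq := by
    rw [hvw, hw_def]
    ring
  have hcross : ∀ c : Fin rt → ℚ, L.qbilin (u ᵥ* BSq) (c ᵥ* BTq) = 0 := by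
    intro c
    rw [hBSq, hBTq, L.qbilin_vecMul_both, horth]
    simp
  refine ⟨u, v, hdecomp, ?_, ?_, hmulinj⟩
  · intro c
    refine ⟨L.bilin x (c ᵥ* BS), ?_⟩
    have h1 : (L.sub BS).qbilin u (castVec c) = L.qbilin (u ᵥ* BSq) (castVec c ᵥ* BSq) :=
      L.sub_qbilin BS u (castVec c)
    have h2 : L.qbilin (u ᵥ* BSq) (castVec c ᵥ* BSq)
        = L.qbilin (castVec x) (castVec c ᵥ* BSq) - L.qbilin w (castVec c ᵥ* BSq) := by
      rw [hw_def, L.qbilin_sub_left]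
      ring
    erw [h1, h2, hw (castVec c), sub_zero, ← castVec_vecMul, L.qbilin_castVec]
  · intro c
    refine ⟨L.bilin x (c ᵥ* BT), ?_⟩
    have h1 : (L.sub BT).qbilin v (castVec c) = L.qbilin (v ᵥ* BTq) (castVec c ᵥ* BTq) :=
      L.sub_qbilin BT v (castVec c)
    have h2 : L.qbilin (v ᵥ* BTq) (castVec c ᵥ* BTq)
        = L.qbilin (castVec x) (castVec c ᵥ* BTq)
          - L.qbilin (u ᵥ* BSq) (castVec c ᵥ* BTq) := by
      rw [hvw, hw_def, L.qbilin_sub_left]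
    erw [h1, h2, hcross (castVec c), sub_zero, ← castVec_vecMul, L.qbilin_castVec]

end GlueC


section GlueD

open IntLattice

/-- Surjectivity of the projection `L → A_S`: every element of the dual of `S` is, up to
nothing at all, the `S`-component of an integral vector. -/
lemma glue_side (L : IntLattice) (hu : L.IsUnimodular) {rs rt : ℕ}
    (BS : Matrix (Fin rs) (Fin L.rank) ℤ) (BT : Matrix (Fin rt) (Fin L.rank) ℤ)
    (horth : BS * L.gram * BTᵀ = 0)
    (hdetS : IsUnit (((L.gramOf BS).map ((↑) : ℤ → ℚ))).det)
    (hperp : ∀ z : Fin L.rank → ℤ, (∀ i, L.bilin z (BS i) = 0) → ∃ c, z = c ᵥ* BT)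
    (Sm : Submodule ℤ (Fin L.rank → ℤ)) (hBS : IsBasisOf Sm BS)
    (hprim : ∀ (m : ℤ) (x : Fin L.rank → ℤ), m ≠ 0 → m • x ∈ Sm → x ∈ Sm)
    (u : Fin (L.sub BS).rank → ℚ) (hu_mem : u ∈ (L.sub BS).dualSub) :
    ∃ (x : Fin L.rank → ℤ) (v : Fin (L.sub BT).rank → ℚ), v ∈ (L.sub BT).dualSub ∧
      castVec x = u ᵥ* BS.map ((↑) : ℤ → ℚ) + v ᵥ* BT.map ((↑) : ℤ → ℚ) := by
  classical
  set BSq := BS.map ((↑) : ℤ → ℚ) with hBSq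
  set Gq := L.gram.map ((↑) : ℤ → ℚ) with hGq
  set GSq := (L.gramOf BS).map ((↑) : ℤ → ℚ) with hGSq
  obtain ⟨π, hπ_mem, hπ_fix⟩ := glue_splitting Sm hprim
  -- the functional `z ↦ ⟨u·BS, π z⟩` as an additive hom into `ℚ`
  set F : (Fin L.rank → ℤ) →+ ℚ :=
    { toFun := fun z => L.qbilin (u ᵥ* BSq) (castVec (π z))
      map_zero' := by
        show L.qbilin (u ᵥ* BSq) (castVec (π 0)) = 0
        rw [map_zero, show castVec (0 : Fin L.rank → ℤ) = 0 from funext fun i => by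
          simp [castVec]]
        simp [IntLattice.qbilin]
      map_add' := fun a b => by
        show L.qbilin (u ᵥ* BSq) (castVec (π (a + b)))
            = L.qbilin (u ᵥ* BSq) (castVec (π a)) + L.qbilin (u ᵥ* BSq) (castVec (π b))
        rw [map_add, castVec_add, L.qbilin_add_right] } with hF
  have hF_apply : ∀ z, F z = L.qbilin (u ᵥ* BSq) (castVec (π z)) := fun z => rfl
  -- values of `F` are integers
  have hF_int : ∀ z, ∃ d : ℤ, F z = d := by
    intro z
    obtain ⟨c, hc, -⟩ := hBS.2 (π z) (hπ_mem z)
    obtain ⟨d, hd⟩ := hu_mem c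
    refine ⟨d, ?_⟩
    erw [hF_apply, hc, castVec_vecMul, ← hBSq, ← L.sub_qbilin BS, hd]
  choose d hd using hF_int
  set dv : Fin L.rank → ℤ := fun i => d (Pi.single i 1) with hdv
  -- F as a dot product
  have hF_dot : ∀ z, F z = castVec z ⬝ᵥ castVec dv := by
    intro z
    have hlin := (F.toIntLinearMap.comp
      (LinearMap.id : (Fin L.rank → ℤ) →ₗ[ℤ] (Fin L.rank → ℤ))).pi_apply_eq_sum_univ z
    simp only [LinearMap.comp_apply, LinearMap.id_apply, AddMonoidHom.coe_toIntLinearMap] at hlin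
    rw [hlin]
    simp only [dotProduct, castVec]
    refine Finset.sum_congr rfl fun i _ => ?_
    have h1 : (fun j => if i = j then (1 : ℤ) else 0) = Pi.single i 1 := by
      funext j
      simp [Pi.single_apply, eq_comm]
    rw [h1, hd (Pi.single i 1), zsmul_eq_mul]
  -- solve `G *ᵥ x = dv` using unimodularity
  set x := L.gram⁻¹ *ᵥ dv with hx
  have hGx : L.gram *ᵥ x = dv := by
    rw [hx, mulVec_mulVec, Matrix.mul_nonsing_inv _ hu, one_mulVec]
  -- the S-projection of `x` is `u`
  have hkey : GSq *ᵥ u = (BSq * Gq) *ᵥ castVec x := by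
    have h1 : (BSq * Gq) *ᵥ castVec x = BSq *ᵥ castVec dv := by
      rw [← mulVec_mulVec, ← castVec_mulVec, hGx]
    rw [h1]
    funext i
    have h2 : (BSq *ᵥ castVec dv) i = castVec (BS i) ⬝ᵥ castVec dv := by
      simp only [mulVec, hBSq]
      congr 1
    have h3 : castVec (BS i) ⬝ᵥ castVec dv = F (BS i) := by
      rw [hF_dot]
    have h4 : F (BS i) = L.qbilin (u ᵥ* BSq) (castVec (BS i)) := by
      rw [hF_apply, hπ_fix (BS i) (hBS.1 i)]
    have h5 : L.qbilin (u ᵥ* BSq) (castVec (BS i)) = (GSq *ᵥ u) i := by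
      erw [castVec_row, ← hBSq, hBSq, L.qbilin_vecMul_both, ← IntLattice.gramOf_eq, ← hGSq]
      have hGSq_symm : GSq.IsSymm := (L.gramOf_isSymm BS).map _
      erw [dot_mulVec_symm hGSq_symm]
      simp [dotProduct, Pi.single_apply]
    rw [h2, h3, h4, h5]
  obtain ⟨u₀, v, hdec, hu₀, hv, huniq⟩ := glue_decomp L BS BT horth hdetS hperp x
  have : u = u₀ := huniq u hkey
  exact ⟨x, v, hv, by rw [this]; exact hdec⟩

end GlueD


section GlueE

open IntLattice

lemma dmk_eq_iff (M : IntLattice) (v v' : M.dualSub) :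
    M.dmk v = M.dmk v'
      ↔ ∃ c : Fin M.rank → ℤ, (v' : Fin M.rank → ℚ) - (v : Fin M.rank → ℚ) = castVec c := by
  have hco : ((-v + v' : M.dualSub) : Fin M.rank → ℚ)
      = (v' : Fin M.rank → ℚ) - (v : Fin M.rank → ℚ) := by
    push_cast
    ring
  show (QuotientAddGroup.mk v : M.discGroup) = QuotientAddGroup.mk v' ↔ _
  rw [QuotientAddGroup.eq, AddSubgroup.mem_addSubgroupOf, hco]
  show ((v' : Fin M.rank → ℚ) - (v : Fin M.rank → ℚ)) ∈ (castHom M.rank).range ↔ _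
  rw [AddMonoidHom.mem_range]
  exact ⟨fun ⟨c, h⟩ => ⟨c, h.symm⟩, fun ⟨c, h⟩ => ⟨c, h.symm⟩⟩

end GlueE


section GlueF

open IntLattice

lemma glue_sameS (L : IntLattice) {rs rt : ℕ} (BS : Matrix (Fin rs) (Fin L.rank) ℤ)
    {BT : Matrix (Fin rt) (Fin L.rank) ℤ} {Tm : Submodule ℤ (Fin L.rank → ℤ)}
    (hBT : IsBasisOf Tm BT)
    (hprimT : ∀ (m : ℤ) (x : Fin L.rank → ℤ), m ≠ 0 → m • x ∈ Tm → x ∈ Tm)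
    (a : Fin rs → ℚ) (b b' : Fin rt → ℚ) (x x' : Fin L.rank → ℤ)
    (h : castVec x = a ᵥ* BS.map ((↑) : ℤ → ℚ) + b ᵥ* BT.map ((↑) : ℤ → ℚ))
    (h' : castVec x' = a ᵥ* BS.map ((↑) : ℤ → ℚ) + b' ᵥ* BT.map ((↑) : ℤ → ℚ)) :
    ∃ c : Fin rt → ℤ, b' - b = castVec c := by
  have e1 : castVec (x' - x) = (b' - b) ᵥ* BT.map ((↑) : ℤ → ℚ) := by
    rw [castVec_sub, h, h', sub_vecMul']
    abel
  obtain ⟨c, hc, -⟩ := glue_coords_int hBT hprimT _ _ e1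
  exact ⟨c, hc⟩

lemma glue_mkhom (L : IntLattice) {rs rt : ℕ}
    (BS : Matrix (Fin rs) (Fin L.rank) ℤ) (BT : Matrix (Fin rt) (Fin L.rank) ℤ)
    (Tm : Submodule ℤ (Fin L.rank → ℤ)) (hBT : IsBasisOf Tm BT)
    (hprimT : ∀ (m : ℤ) (x : Fin L.rank → ℤ), m ≠ 0 → m • x ∈ Tm → x ∈ Tm)
    (X : ((L.sub BS).dualSub) → (Fin L.rank → ℤ))
    (V : ((L.sub BS).dualSub) → ((L.sub BT).dualSub))
    (hXV : ∀ u, castVec (X u) = (u : Fin (L.sub BS).rank → ℚ) ᵥ* BS.map ((↑) : ℤ → ℚ)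
        + ((V u : Fin (L.sub BT).rank → ℚ)) ᵥ* BT.map ((↑) : ℤ → ℚ)) :
    ∃ γF : (L.sub BS).discGroup →+ (L.sub BT).discGroup,
      (∀ (u : (L.sub BS).dualSub) (v : (L.sub BT).dualSub) (x : Fin L.rank → ℤ),
        castVec x = (u : Fin (L.sub BS).rank → ℚ) ᵥ* BS.map ((↑) : ℤ → ℚ)
            + (v : Fin (L.sub BT).rank → ℚ) ᵥ* BT.map ((↑) : ℤ → ℚ) →
        γF ((L.sub BS).dmk u) = (L.sub BT).dmk v) := by
  classical
  -- choice-independence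
  have hgen : ∀ (u : (L.sub BS).dualSub) (v : (L.sub BT).dualSub) (x : Fin L.rank → ℤ),
      castVec x = (u : Fin (L.sub BS).rank → ℚ) ᵥ* BS.map ((↑) : ℤ → ℚ)
          + (v : Fin (L.sub BT).rank → ℚ) ᵥ* BT.map ((↑) : ℤ → ℚ) →
      (L.sub BT).dmk (V u) = (L.sub BT).dmk v := by
    intro u v x hx
    obtain ⟨c, hc⟩ := glue_sameS L BS hBT hprimT _ _ _ _ _ (hXV u) hx
    exact (dmk_eq_iff (L.sub BT) (V u) v).mpr ⟨c, hc⟩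
  -- additivity
  have hVadd : ∀ u u' : (L.sub BS).dualSub,
      (L.sub BT).dmk (V (u + u')) = (L.sub BT).dmk (V u) + (L.sub BT).dmk (V u') := by
    intro u u'
    have h2 : (L.sub BT).dmk (V u) + (L.sub BT).dmk (V u') = (L.sub BT).dmk (V u + V u') := by
      show QuotientAddGroup.mk _ + QuotientAddGroup.mk _ = _
      rw [← QuotientAddGroup.mk_add]
      rfl
    rw [h2]
    have e1 : castVec (X u + X u')
        = ((u + u' : (L.sub BS).dualSub) : Fin (L.sub BS).rank → ℚ) ᵥ* BS.map ((↑) : ℤ → ℚ)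
          + ((V u + V u' : (L.sub BT).dualSub) : Fin (L.sub BT).rank → ℚ) ᵥ* BT.map ((↑) : ℤ → ℚ) := by
      erw [castVec_add, hXV u, hXV u', AddSubgroup.coe_add, AddSubgroup.coe_add,
        add_vecMul', add_vecMul']
      abel
    exact hgen (u + u') (V u + V u') (X u + X u') e1
  -- the homomorphism on dual groups
  set F1 : ((L.sub BS).dualSub) →+ (L.sub BT).discGroup :=
    AddMonoidHom.mk' (fun u => (L.sub BT).dmk (V u)) hVadd with hF1
  have hker : ((L.sub BS).latticeIn).addSubgroupOf (L.sub BS).dualSub ≤ F1.ker := by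
    intro u hu
    obtain ⟨c, hc⟩ := AddMonoidHom.mem_range.mp (AddSubgroup.mem_addSubgroupOf.mp hu)
    have e1 : castVec (c ᵥ* BS)
        = (u : Fin (L.sub BS).rank → ℚ) ᵥ* BS.map ((↑) : ℤ → ℚ)
          + (((0 : (L.sub BT).dualSub) : Fin (L.sub BT).rank → ℚ)) ᵥ* BT.map ((↑) : ℤ → ℚ) := by
      erw [castVec_vecMul, AddSubgroup.coe_zero, Matrix.zero_vecMul, add_zero]
      have hc' : castVec c = (u : Fin (L.sub BS).rank → ℚ) := hc
      rw [hc']; rfl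
    have h3 : (L.sub BT).dmk (V u) = (L.sub BT).dmk 0 := hgen u 0 (c ᵥ* BS) e1
    have h4 : (L.sub BT).dmk (0 : (L.sub BT).dualSub) = 0 := rfl
    show F1 u = 0
    rw [hF1]
    show (L.sub BT).dmk (V u) = 0
    rw [h3, h4]
  refine ⟨QuotientAddGroup.lift _ F1 hker, ?_⟩
  intro u v x hx
  have h5 : QuotientAddGroup.lift _ F1 hker ((L.sub BS).dmk u) = F1 u := rfl
  rw [h5]
  show (L.sub BT).dmk (V u) = (L.sub BT).dmk v
  exact hgen u v x hx

end GlueF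

/-- For a primitive nondegenerate sublattice `S` of an even
unimodular lattice `L`, with `T = S^⊥`, the projections of `L` to `S⊗ℚ` and `T⊗ℚ`
land in the dual lattices, and the image of `L` in `A_S ⊕ A_T` is the graph of an
isomorphism `γ : A_S → A_T` with `q_T ∘ γ = -q_S`. -/
theorem gluing_isomorphism (L : IntLattice) (hev : L.IsEven) (hu : L.IsUnimodular)
    (S : Submodule ℤ (Fin L.rank → ℤ))
    (hprim : ∀ (m : ℤ) (x : Fin L.rank → ℤ), m ≠ 0 → m • x ∈ S → x ∈ S)
    (hnd : ∀ x ∈ S, (∀ y ∈ S, L.bilin x y = 0) → x = 0)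
    (rs rt : ℕ)
    (BS : Matrix (Fin rs) (Fin L.rank) ℤ) (BT : Matrix (Fin rt) (Fin L.rank) ℤ)
    (hBS : IsBasisOf S BS)
    (hBT : IsBasisOf (perpOfSet L (S : Set (Fin L.rank → ℤ))) BT) :
    ∃ γ : (L.sub BS).discGroup ≃+ (L.sub BT).discGroup,
      IntLattice.QFormIsoNeg (L.sub BS) (L.sub BT) γ ∧
      (∀ x : Fin L.rank → ℤ,
        ∃ (u : (L.sub BS).dualSub) (v : (L.sub BT).dualSub),
          castVec x =
            Matrix.vecMul (u : Fin (IntLattice.sub L BS).rank → ℚ) (BS.map ((↑) : ℤ → ℚ)) +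
            Matrix.vecMul (v : Fin (IntLattice.sub L BT).rank → ℚ) (BT.map ((↑) : ℤ → ℚ)) ∧
          γ ((L.sub BS).dmk u) = (L.sub BT).dmk v) ∧
      (∀ (u : (L.sub BS).dualSub) (v : (L.sub BT).dualSub),
        γ ((L.sub BS).dmk u) = (L.sub BT).dmk v →
        ∃ x : Fin L.rank → ℤ,
          castVec x =
            Matrix.vecMul (u : Fin (IntLattice.sub L BS).rank → ℚ) (BS.map ((↑) : ℤ → ℚ)) +
            Matrix.vecMul (v : Fin (IntLattice.sub L BT).rank → ℚ) (BT.map ((↑) : ℤ → ℚ))) := by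
  classical
  -- orthogonality of the two blocks
  have horth : BS * L.gram * BTᵀ = 0 := by
    ext i j
    rw [L.bilin_matrix, L.bilin_comm, hBT.1 j (BS i) (hBS.1 i), Matrix.zero_apply]
  have horth' : BT * L.gram * BSᵀ = 0 := by
    ext i j
    rw [L.bilin_matrix, hBT.1 i (BS j) (hBS.1 j), Matrix.zero_apply]
  -- vectors orthogonal to S lie in the span of BT
  have hperpS : ∀ z : Fin L.rank → ℤ, (∀ i, L.bilin z (BS i) = 0) → ∃ c, z = c ᵥ* BT := by
    intro z hz
    have hzT : z ∈ perpOfSet L (S : Set (Fin L.rank → ℤ)) := by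
      intro s hs
      obtain ⟨c, hc, -⟩ := hBS.2 s hs
      rw [hc, L.bilin_comm, L.bilin_vecMul_left]
      have hzero : (fun i => L.bilin (BS i) z) = fun _ => (0 : ℤ) :=
        funext fun i => by rw [L.bilin_comm]; exact hz i
      rw [hzero]
      simp [dotProduct]
    obtain ⟨c, hc, -⟩ := hBT.2 z hzT
    exact ⟨c, hc⟩
  -- nondegeneracy of the Gram matrix of S over ℚ
  have hdetS : IsUnit ((L.gramOf BS).map ((↑) : ℤ → ℚ)).det := by
    rw [isUnit_iff_ne_zero]
    intro hdet0
    obtain ⟨vq, hvq0, hker⟩ := Matrix.exists_mulVec_eq_zero_iff.mpr hdet0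
    obtain ⟨m, zc, hm, hmz⟩ := exists_int_smul vq
    have hzc0 : zc ≠ 0 := by
      intro h
      apply hvq0
      have h1 : (m : ℚ) • vq = 0 := by rw [hmz, h]; funext i; simp [castVec]
      exact (smul_eq_zero.mp h1).resolve_left (Int.cast_ne_zero.mpr hm)
    have hker2 : L.gramOf BS *ᵥ zc = 0 := by
      apply castVec_injective
      rw [castVec_mulVec, ← hmz, Matrix.mulVec_smul, hker, smul_zero]
      funext i; simp [castVec]
    have hs0 : zc ᵥ* BS = 0 := by
      apply hnd _ (vecMul_mem hBS.1 zc)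
      intro y hy
      obtain ⟨c, hc, -⟩ := hBS.2 y hy
      rw [hc, L.bilin_vecMul_both, ← L.gramOf_eq, dot_mulVec_symm (L.gramOf_isSymm BS),
        hker2, zero_dotProduct]
    exact hzc0 (basis_ind hBS zc hs0)
  have decompS := fun x => glue_decomp L BS BT horth hdetS hperpS x
  -- nondegeneracy of the Gram matrix of T over ℚ
  have hdetT : IsUnit ((L.gramOf BT).map ((↑) : ℤ → ℚ)).det := by
    rw [isUnit_iff_ne_zero]
    intro hdet0
    obtain ⟨vq, hvq0, hker⟩ := Matrix.exists_mulVec_eq_zero_iff.mpr hdet0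
    obtain ⟨m, zc, hm, hmz⟩ := exists_int_smul vq
    have hzc0 : zc ≠ 0 := by
      intro h
      apply hvq0
      have h1 : (m : ℚ) • vq = 0 := by rw [hmz, h]; funext i; simp [castVec]
      exact (smul_eq_zero.mp h1).resolve_left (Int.cast_ne_zero.mpr hm)
    have hker2 : ((L.gramOf BT).map ((↑) : ℤ → ℚ)) *ᵥ castVec zc = 0 := by
      rw [← hmz, Matrix.mulVec_smul, hker, smul_zero]
    have hbt0 : ∀ y : Fin L.rank → ℤ, L.bilin (zc ᵥ* BT) y = 0 := by
      intro y
      obtain ⟨a, b, hdec, -, -, -⟩ := decompS y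
      have hq : L.qbilin (castVec (zc ᵥ* BT)) (castVec y) = 0 := by
        rw [castVec_vecMul, hdec, L.qbilin_add_right]
        have t1 : L.qbilin (castVec zc ᵥ* BT.map ((↑) : ℤ → ℚ))
            (a ᵥ* BS.map ((↑) : ℤ → ℚ)) = 0 := by
          exact (L.qbilin_vecMul_both BT BS _ _).trans (by rw [horth']; simp [dotProduct, mulVec])
        have t2 : L.qbilin (castVec zc ᵥ* BT.map ((↑) : ℤ → ℚ))
            (b ᵥ* BT.map ((↑) : ℤ → ℚ)) = 0 := by
          erw [L.qbilin_vecMul_both, ← L.gramOf_eq,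
            dot_mulVec_symm ((L.gramOf_isSymm BT).map _), hker2, zero_dotProduct]
        rw [t1, t2, add_zero]
      have h2 := L.qbilin_castVec (zc ᵥ* BT) y
      rw [hq] at h2
      exact_mod_cast h2.symm
    have hvg : (zc ᵥ* BT) ᵥ* L.gram = 0 := by
      funext j
      have h1 := hbt0 (Pi.single j 1)
      have h2 : L.bilin (zc ᵥ* BT) (Pi.single j 1) = ((zc ᵥ* BT) ᵥ* L.gram) j := by
        simp [IntLattice.bilin, vecMul, mulVec, dotProduct, Pi.single_apply]
      rw [h2] at h1
      exact h1
    have ht0 : zc ᵥ* BT = 0 := by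
      calc zc ᵥ* BT = (zc ᵥ* BT) ᵥ* (1 : Matrix (Fin L.rank) (Fin L.rank) ℤ) :=
            (Matrix.vecMul_one _).symm
        _ = (zc ᵥ* BT) ᵥ* (L.gram * L.gram⁻¹) := by rw [Matrix.mul_nonsing_inv _ hu]
        _ = ((zc ᵥ* BT) ᵥ* L.gram) ᵥ* L.gram⁻¹ := (Matrix.vecMul_vecMul _ _ _).symm
        _ = 0 := by rw [hvg, Matrix.zero_vecMul]
    exact hzc0 (basis_ind hBT zc ht0)
  -- vectors orthogonal to T lie in the span of BS
  have hperpT : ∀ z : Fin L.rank → ℤ, (∀ j, L.bilin z (BT j) = 0) → ∃ c, z = c ᵥ* BS := by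
    intro z hz
    obtain ⟨a, b, hdec, -, -, -⟩ := decompS z
    have hb : ((L.gramOf BT).map ((↑) : ℤ → ℚ)) *ᵥ b = 0 := by
      funext j
      have h1 : L.qbilin (castVec z) (castVec (BT j)) = 0 := by
        rw [L.qbilin_castVec]
        exact_mod_cast congrArg (Int.cast : ℤ → ℚ) (hz j)
      have h2 : L.qbilin (a ᵥ* BS.map ((↑) : ℤ → ℚ)) (castVec (BT j)) = 0 := by
        rw [castVec_row]
        exact (L.qbilin_vecMul_both BS BT _ _).trans (by rw [horth]; simp [dotProduct, mulVec])
      have h3 := glue_row_pair L BT b j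
      have h4 : L.qbilin (castVec z) (castVec (BT j))
          = L.qbilin (a ᵥ* BS.map ((↑) : ℤ → ℚ)) (castVec (BT j))
            + L.qbilin (b ᵥ* BT.map ((↑) : ℤ → ℚ)) (castVec (BT j)) := by
        rw [hdec, L.qbilin_add_left]
      erw [h1, h2, h3, zero_add] at h4
      rw [← h4]
      simp
    have hb0 : b = 0 := by
      have h5 := congrArg (fun w => ((L.gramOf BT).map ((↑) : ℤ → ℚ))⁻¹ *ᵥ w) hb
      simp only [Matrix.mulVec_zero] at h5
      erw [mulVec_mulVec, Matrix.nonsing_inv_mul _ hdetT, one_mulVec] at h5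
      exact h5
    have hz2 : castVec z = a ᵥ* BS.map ((↑) : ℤ → ℚ) := by
      erw [hdec, hb0, Matrix.zero_vecMul, add_zero]
    obtain ⟨c, -, hc2⟩ := glue_coords_int hBS hprim z a hz2
    exact ⟨c, hc2⟩
  -- T is primitive
  have hprimT : ∀ (m : ℤ) (x : Fin L.rank → ℤ), m ≠ 0 →
      m • x ∈ perpOfSet L (S : Set (Fin L.rank → ℤ)) →
      x ∈ perpOfSet L (S : Set (Fin L.rank → ℤ)) := by
    intro m x hm hmx
    intro s hs
    have h1 : L.bilin (m • x) s = 0 := hmx s hs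
    have h2 : L.bilin (m • x) s = m * L.bilin x s := by
      rw [IntLattice.bilin, IntLattice.bilin, smul_dotProduct, smul_eq_mul]
    rw [h2] at h1
    exact (mul_eq_zero.mp h1).resolve_left hm
  -- surjectivity of both projections
  have sideS := glue_side L hu BS BT horth hdetS hperpS S hBS hprim
  have sideT := glue_side L hu BT BS horth' hdetT hperpT
    (perpOfSet L (S : Set (Fin L.rank → ℤ))) hBT hprimT
  have hchoiceS : ∀ u : (L.sub BS).dualSub,
      ∃ (x : Fin L.rank → ℤ) (v : (L.sub BT).dualSub),
        castVec x = (u : Fin (L.sub BS).rank → ℚ) ᵥ* BS.map ((↑) : ℤ → ℚ)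
          + (v : Fin (L.sub BT).rank → ℚ) ᵥ* BT.map ((↑) : ℤ → ℚ) := by
    intro u
    obtain ⟨x, v, hv, hdec⟩ := sideS u u.2
    exact ⟨x, ⟨v, hv⟩, hdec⟩
  choose X V hXV using hchoiceS
  have hchoiceT : ∀ v : (L.sub BT).dualSub,
      ∃ (x : Fin L.rank → ℤ) (u : (L.sub BS).dualSub),
        castVec x = (v : Fin (L.sub BT).rank → ℚ) ᵥ* BT.map ((↑) : ℤ → ℚ)
          + (u : Fin (L.sub BS).rank → ℚ) ᵥ* BS.map ((↑) : ℤ → ℚ) := by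
    intro v
    obtain ⟨x, u, hu', hdec⟩ := sideT v v.2
    exact ⟨x, ⟨u, hu'⟩, hdec⟩
  choose X' V' hXV' using hchoiceT
  -- induced homomorphisms on the discriminant groups
  obtain ⟨γF, hγF⟩ := glue_mkhom L BS BT (perpOfSet L (S : Set (Fin L.rank → ℤ)))
    hBT hprimT X V hXV
  obtain ⟨δF, hδF⟩ := glue_mkhom L BT BS S hBS hprim X' V' hXV'
  have hVγ : ∀ u, γF ((L.sub BS).dmk u) = (L.sub BT).dmk (V u) :=
    fun u => hγF u (V u) (X u) (hXV u)
  have hVδ : ∀ v, δF ((L.sub BT).dmk v) = (L.sub BS).dmk (V' v) :=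
    fun v => hδF v (V' v) (X' v) (hXV' v)
  have hleft : ∀ q : (L.sub BS).discGroup, δF (γF q) = q := by
    intro q
    refine QuotientAddGroup.induction_on q ?_
    intro u
    have h1 : γF ((L.sub BS).dmk u) = (L.sub BT).dmk (V u) := hVγ u
    have h2 : δF ((L.sub BT).dmk (V u)) = (L.sub BS).dmk u := by
      apply hδF (V u) u (X u)
      rw [hXV u]
      abel
    show δF (γF ((L.sub BS).dmk u)) = (L.sub BS).dmk u
    rw [h1, h2]
  have hright : ∀ q : (L.sub BT).discGroup, γF (δF q) = q := by
    intro q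
    refine QuotientAddGroup.induction_on q ?_
    intro v
    have h1 : δF ((L.sub BT).dmk v) = (L.sub BS).dmk (V' v) := hVδ v
    have h2 : γF ((L.sub BS).dmk (V' v)) = (L.sub BT).dmk v := by
      apply hγF (V' v) v (X' v)
      rw [hXV' v]
      abel
    show γF (δF ((L.sub BT).dmk v)) = (L.sub BT).dmk v
    rw [h1, h2]
  refine ⟨AddEquiv.mk ⟨γF, δF, hleft, hright⟩ γF.map_add, ?_, ?_, ?_⟩
  · -- the quadratic forms correspond
    intro u
    refine ⟨V u, (hVγ u).symm, ?_⟩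
    obtain ⟨mm, hmm⟩ := hev (X u)
    refine ⟨mm, ?_⟩
    have e1 : (L.sub BT).qbilin ↑(V u) ↑(V u) + (L.sub BS).qbilin ↑u ↑u
        = ((L.bilin (X u) (X u) : ℤ) : ℚ) := by
      rw [← L.qbilin_castVec, hXV u, L.qbilin_add_left, L.qbilin_add_right, L.qbilin_add_right]
      have c1 : L.qbilin ((u : Fin (L.sub BS).rank → ℚ) ᵥ* BS.map ((↑) : ℤ → ℚ))
          ((V u : Fin (L.sub BT).rank → ℚ) ᵥ* BT.map ((↑) : ℤ → ℚ)) = 0 := by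
        exact (L.qbilin_vecMul_both BS BT _ _).trans (by rw [horth]; simp [dotProduct, mulVec])
      have c2 : L.qbilin ((V u : Fin (L.sub BT).rank → ℚ) ᵥ* BT.map ((↑) : ℤ → ℚ))
          ((u : Fin (L.sub BS).rank → ℚ) ᵥ* BS.map ((↑) : ℤ → ℚ)) = 0 := by
        exact (L.qbilin_vecMul_both BT BS _ _).trans (by rw [horth']; simp [dotProduct, mulVec])
      erw [c1, c2, ← L.sub_qbilin BS, ← L.sub_qbilin BT]
      ring
    rw [e1, hmm]
    push_cast
    ring
  · -- every integral vector decomposes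
    intro x
    obtain ⟨a, b, hdec, ha, hb, -⟩ := decompS x
    exact ⟨⟨a, ha⟩, ⟨b, hb⟩, hdec, hγF ⟨a, ha⟩ ⟨b, hb⟩ x hdec⟩
  · -- the graph property
    intro u v hγuv
    have h1 : (L.sub BT).dmk (V u) = (L.sub BT).dmk v := by
      rw [← hVγ u]
      exact hγuv
    obtain ⟨c, hc⟩ := (dmk_eq_iff _ _ _).mp h1
    refine ⟨X u + c ᵥ* BT, ?_⟩
    have e2 : castVec (c ᵥ* BT) = (v : Fin (L.sub BT).rank → ℚ) ᵥ* BT.map ((↑) : ℤ → ℚ)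
        - (V u : Fin (L.sub BT).rank → ℚ) ᵥ* BT.map ((↑) : ℤ → ℚ) := by
      exact (castVec_vecMul c BT).trans (by rw [← hc]; exact sub_vecMul' _ _ _)
    rw [castVec_add, hXV u, e2]
    abel
end
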